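/- arXiv:2507.23584 — 6 statements merged into one kernel-verified Lean document; each statement's English description precedes it below -/
import Mathlib

section
/- Let γ : I → X be locally of bounded variation, let t ∈ I, and let (s_n) be a sequence in (-∞,t) ∩ I with s_n → t. Then the limits lim_{n→∞} Var(γ;[s_n,t]) and lim_{n→∞} d(γ(s_n),γ(t)) both exist and are equal. The analogous statement holds for sequences (s_n) in (t,+∞) ∩ I with s_n → t, where lim_{n→∞} Var(γ;[t,s_n]) = lim_{n→∞} d(γ(t),γ(s_n)). -/
open Filter Topology Set
open scoped ENNReal

private lemma my_Icc_add_Icc {X : Type*} [MetricSpace X] (γ : ℝ → X) {a b c : ℝ}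
    (hab : a ≤ b) (hbc : b ≤ c) :
    eVariationOn γ (Icc a b) + eVariationOn γ (Icc b c) = eVariationOn γ (Icc a c) := by
  have h := eVariationOn.Icc_add_Icc γ (s := Icc a c) hab hbc ⟨hab, hbc⟩
  rwa [inter_eq_self_of_subset_right (Icc_subset_Icc_right hbc),
    inter_eq_self_of_subset_right (Icc_subset_Icc_left hab), inter_self] at h

private lemma my_extract {X : Type*} [MetricSpace X] (γ : ℝ → X) {u₀ t : ℝ}
    (h : u₀ < t) {ε : ℝ≥0∞} (hε : 0 < ε) (hfin : eVariationOn γ (Icc u₀ t) ≠ ⊤) :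
    ∃ w, w ∈ Icc u₀ t ∧ w < t ∧
      eVariationOn γ (Icc u₀ t) ≤ eVariationOn γ (Icc u₀ w) + edist (γ w) (γ t) + ε := by
  set S := eVariationOn γ (Icc u₀ t) with hS
  rcases le_or_gt S ε with hSε | hεS
  · exact ⟨u₀, ⟨le_rfl, h.le⟩, h,
      hSε.trans le_add_self⟩
  -- get a partition with sum ≥ S - ε
  have h1 : S - ε < S := ENNReal.sub_lt_self hfin (hε.trans hεS).ne' hε.ne'
  rw [hS, eVariationOn, lt_iSup_iff] at h1
  obtain ⟨⟨n, u, hu, us⟩, hsum⟩ := h1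
  have hSle : S ≤ (∑ i ∈ Finset.range n, edist (γ (u (i + 1))) (γ (u i))) + ε := by
    rw [hS, eVariationOn]
    exact tsub_le_iff_right.mp hsum.le
  -- find the last index with u i < t
  by_cases hK : ∃ i ∈ Finset.range (n + 1), u i < t
  · set K := (Finset.range (n + 1)).filter (fun i => u i < t) with hKdef
    have hKne : K.Nonempty := by
      obtain ⟨i, hi, hit⟩ := hK
      exact ⟨i, by simp [hKdef, Finset.mem_filter, Finset.mem_range.1 hi, hit]⟩
    set k := K.max' hKne with hk
    have hkK : k ∈ K := K.max'_mem hKne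
    have hkn : k ≤ n := by
      exact Nat.lt_succ_iff.1 (Finset.mem_range.1 (Finset.mem_filter.1 hkK).1)
    have hkt : u k < t := (Finset.mem_filter.1 hkK).2
    have htop : ∀ i, k < i → i ≤ n → u i = t := by
      intro i hki hin
      by_contra hne
      have hit : u i < t := lt_of_le_of_ne (us i).2 hne
      have : i ∈ K := Finset.mem_filter.2 ⟨Finset.mem_range.2 (by omega), hit⟩
      exact absurd (K.le_max' i this) (by omega)
    refine ⟨u k, us k, hkt, ?_⟩
    -- split the sum
    have hsplit : (∑ i ∈ Finset.range n, edist (γ (u (i + 1))) (γ (u i)))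
        = (∑ i ∈ Finset.Ico 0 k, edist (γ (u (i + 1))) (γ (u i)))
          + ∑ i ∈ Finset.Ico k n, edist (γ (u (i + 1))) (γ (u i)) := by
      rw [Finset.range_eq_Ico, Finset.sum_Ico_consecutive _ (Nat.zero_le k) hkn]
    have h1 : (∑ i ∈ Finset.Ico 0 k, edist (γ (u (i + 1))) (γ (u i)))
        ≤ eVariationOn γ (Icc u₀ (u k)) := by
      rw [← Finset.range_eq_Ico]
      apply eVariationOn.sum_le_of_monotoneOn_Iic (f := γ) (hu.monotoneOn _)
      intro i hik
      exact ⟨(us i).1, hu hik⟩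
    have h2 : (∑ i ∈ Finset.Ico k n, edist (γ (u (i + 1))) (γ (u i)))
        ≤ edist (γ (u k)) (γ t) := by
      rcases eq_or_lt_of_le hkn with heq | hlt
      · simp [← heq]
      rw [Finset.sum_eq_sum_Ico_succ_bot hlt]
      have hk1 : u (k + 1) = t := htop (k + 1) (by omega) (by omega)
      have hzero : ∀ i ∈ Finset.Ico (k + 1) n, edist (γ (u (i + 1))) (γ (u i)) = 0 := by
        intro i hi
        rw [Finset.mem_Ico] at hi
        rw [htop i (by omega) (by omega), htop (i + 1) (by omega) (by omega), edist_self]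
      rw [Finset.sum_eq_zero hzero, add_zero, hk1, edist_comm]
    calc S ≤ (∑ i ∈ Finset.range n, edist (γ (u (i + 1))) (γ (u i))) + ε := hSle
      _ ≤ eVariationOn γ (Icc u₀ (u k)) + edist (γ (u k)) (γ t) + ε := by
          rw [hsplit]; exact add_le_add (add_le_add h1 h2) le_rfl
  · -- all partition points equal t, sum is zero
    push_neg at hK
    have hzero : ∀ i ∈ Finset.range n, edist (γ (u (i + 1))) (γ (u i)) = 0 := by
      intro i hi
      rw [Finset.mem_range] at hi
      have h1 : u i = t :=
        le_antisymm (us i).2 (hK i (Finset.mem_range.2 (by omega)))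
      have h2 : u (i + 1) = t :=
        le_antisymm (us (i + 1)).2 (hK (i + 1) (Finset.mem_range.2 (by omega)))
      rw [h1, h2, edist_self]
    rw [Finset.sum_eq_zero hzero, zero_add] at hSle
    exact absurd hSle (not_le.2 hεS)

private lemma my_left {X : Type*} [MetricSpace X]
    (I : Set ℝ) (hI : I.OrdConnected) (γ : ℝ → X)
    (hγ : ∀ a ∈ I, ∀ b ∈ I, a ≤ b → eVariationOn γ (Set.Icc a b) < ⊤)
    (t : ℝ) (ht : t ∈ I)
    (s : ℕ → ℝ) (hs : ∀ n, s n ∈ I ∧ s n < t) (hst : Tendsto s atTop (𝓝 t)) :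
    ∃ L : ℝ,
      Tendsto (fun n => (eVariationOn γ (Set.Icc (s n) t)).toReal) atTop (𝓝 L) ∧
      Tendsto (fun n => dist (γ (s n)) (γ t)) atTop (𝓝 L) := by
  set f : ℝ → ℝ≥0∞ := fun u => eVariationOn γ (Icc u t) with hf
  have hfin : ∀ u ∈ I, u ≤ t → f u ≠ ⊤ := fun u hu hut => (hγ u hu t ht hut).ne
  set V : ℝ≥0∞ := ⨅ u : {u : ℝ // u ∈ I ∧ u < t}, f u with hV
  haveI : Nonempty {u : ℝ // u ∈ I ∧ u < t} := ⟨⟨s 0, hs 0⟩⟩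
  have hVle : ∀ u : {u : ℝ // u ∈ I ∧ u < t}, V ≤ f u := fun u => iInf_le _ u
  have hVfin : V ≠ ⊤ :=
    fun h => hfin (s 0) (hs 0).1 (hs 0).2.le (eq_top_iff.2 (h ▸ hVle ⟨s 0, hs 0⟩))
  have hanti : ∀ u u' : ℝ, u ≤ u' → f u' ≤ f u :=
    fun u u' h => eVariationOn.mono γ (Icc_subset_Icc_left h)
  -- Step 1: f ∘ s → V
  have hF : Tendsto (fun n => f (s n)) atTop (𝓝 V) := by
    refine tendsto_order.2 ⟨fun a ha => ?_, fun b hb => ?_⟩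
    · exact Eventually.of_forall fun n => ha.trans_le (hVle ⟨s n, hs n⟩)
    · obtain ⟨u, hu⟩ := iInf_lt_iff.1 hb
      have : ∀ᶠ n in atTop, (u : ℝ) < s n := hst.eventually (eventually_gt_nhds u.2.2)
      exact this.mono fun n hn => (hanti u (s n) hn.le).trans_lt hu
  have hFreal : Tendsto (fun n => (f (s n)).toReal) atTop (𝓝 V.toReal) :=
    (ENNReal.tendsto_toReal hVfin).comp hF
  refine ⟨V.toReal, hFreal, ?_⟩
  -- Step 2: distances
  rw [Metric.tendsto_nhds]
  intro ε hε
  set e := ε / 3 with he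
  have he0 : (0:ℝ) < e := by positivity
  set ε' : ℝ≥0∞ := ENNReal.ofReal e with hε'
  have hε'0 : 0 < ε' := ENNReal.ofReal_pos.2 he0
  -- choose u₀ with f u₀ < V + ε'
  obtain ⟨u₀, hu₀⟩ : ∃ u : {u : ℝ // u ∈ I ∧ u < t}, f u < V + ε' :=
    iInf_lt_iff.1 (ENNReal.lt_add_right hVfin hε'0.ne')
  have hu₀I : (u₀ : ℝ) ∈ I := u₀.2.1
  have hu₀t : (u₀ : ℝ) < t := u₀.2.2
  have hfu₀ : f u₀ ≠ ⊤ := hfin u₀ hu₀I hu₀t.le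
  -- extract w
  obtain ⟨w, hwmem, hwt, hw⟩ := my_extract γ hu₀t hε'0 hfu₀
  have hwI : w ∈ I := hI.out hu₀I ht hwmem
  -- eventual bounds
  have hev1 : ∀ᶠ n in atTop, w < s n := hst.eventually (eventually_gt_nhds hwt)
  have hev2 : ∀ᶠ n in atTop, |(f (s n)).toReal - V.toReal| < e :=
    (Metric.tendsto_nhds.1 hFreal e he0).mono (fun n h => by
      rwa [Real.dist_eq] at h)
  filter_upwards [hev1, hev2] with n hn1 hn2
  have hsnI : s n ∈ I := (hs n).1
  have hsnt : s n < t := (hs n).2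
  -- finiteness of the pieces
  have f1 : eVariationOn γ (Icc (u₀ : ℝ) w) ≠ ⊤ := (hγ u₀ hu₀I w hwI hwmem.1).ne
  have f2 : eVariationOn γ (Icc w (s n)) ≠ ⊤ := (hγ w hwI (s n) hsnI hn1.le).ne
  have f3 : f (s n) ≠ ⊤ := hfin (s n) hsnI hsnt.le
  have f4 : f w ≠ ⊤ := hfin w hwI hwt.le
  -- real abbreviations
  set A := (eVariationOn γ (Icc (u₀ : ℝ) w)).toReal with hA
  set B := (eVariationOn γ (Icc w (s n))).toReal with hB
  set C := (f (s n)).toReal with hC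
  set D := dist (γ w) (γ t) with hD
  set G := dist (γ (s n)) (γ t) with hG
  -- additivity (real form): A + B + C = (f u₀).toReal
  have hadd : A + (B + C) = (f u₀).toReal := by
    have h1 : eVariationOn γ (Icc w (s n)) + eVariationOn γ (Icc (s n) t)
        = f w := my_Icc_add_Icc γ hn1.le hsnt.le
    have h2 : eVariationOn γ (Icc (u₀ : ℝ) w) + f w = f u₀ :=
      my_Icc_add_Icc γ hwmem.1 hwt.le
    rw [hA, hB, hC, ← ENNReal.toReal_add f2 f3, h1, ← ENNReal.toReal_add f1 f4, h2]
  -- bound from extraction: (f u₀).toReal ≤ A + D + e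
  have hfu₀le : (f u₀).toReal ≤ A + D + e := by
    have := ENNReal.toReal_mono (by
        refine ENNReal.add_ne_top.2 ⟨ENNReal.add_ne_top.2 ⟨f1, edist_ne_top _ _⟩, ?_⟩
        simp [hε']) hw
    rwa [ENNReal.toReal_add (ENNReal.add_ne_top.2 ⟨f1, edist_ne_top _ _⟩) (by simp [hε']),
      ENNReal.toReal_add f1 (edist_ne_top _ _), ENNReal.toReal_ofReal he0.le,
      ← hA, ← dist_edist, ← hD] at this
  -- triangle: D ≤ dist (γ w) (γ (s n)) + G ≤ B + G
  have htri : D ≤ B + G := by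
    calc D ≤ dist (γ w) (γ (s n)) + G := dist_triangle _ _ _
      _ ≤ B + G := by
          refine add_le_add ?_ le_rfl
          rw [hB, dist_edist]
          exact ENNReal.toReal_mono f2 (eVariationOn.edist_le γ ⟨le_rfl, hn1.le⟩ ⟨hn1.le, le_rfl⟩)
  -- G ≤ C
  have hGC : G ≤ C := by
    rw [hG, hC, dist_edist]
    exact ENNReal.toReal_mono f3 (eVariationOn.edist_le γ ⟨le_rfl, hsnt.le⟩ ⟨hsnt.le, le_rfl⟩)
  -- conclude: C - e ≤ G ≤ C, |C - V.toReal| < e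
  have hlow : C - e ≤ G := by nlinarith [hadd, hfu₀le, htri]
  have : |G - V.toReal| < 2 * e := by
    rw [abs_lt] at hn2 ⊢
    constructor <;> nlinarith [hn2.1, hn2.2]
  rw [Real.dist_eq]
  calc |G - V.toReal| < 2 * e := this
    _ < ε := by rw [he]; linarith

/-- For `γ : I → X` locally of bounded variation, `t ∈ I`, and a sequence
`(s_n)` in `(-∞,t) ∩ I` with `s_n → t`, the limits `lim Var(γ;[s_n,t])` and
`lim d(γ(s_n),γ(t))` both exist and coincide; analogously from the right. -/
theorem speed_var_left_right_limits {X : Type*} [MetricSpace X]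
    (I : Set ℝ) (hI : I.OrdConnected) (γ : ℝ → X)
    (hγ : ∀ a ∈ I, ∀ b ∈ I, a ≤ b → eVariationOn γ (Set.Icc a b) < ⊤)
    (t : ℝ) (ht : t ∈ I) :
    (∀ s : ℕ → ℝ, (∀ n, s n ∈ I ∧ s n < t) → Tendsto s atTop (𝓝 t) →
      ∃ L : ℝ,
        Tendsto (fun n => (eVariationOn γ (Set.Icc (s n) t)).toReal) atTop (𝓝 L) ∧
        Tendsto (fun n => dist (γ (s n)) (γ t)) atTop (𝓝 L)) ∧
    (∀ s : ℕ → ℝ, (∀ n, s n ∈ I ∧ t < s n) → Tendsto s atTop (𝓝 t) →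
      ∃ L : ℝ,
        Tendsto (fun n => (eVariationOn γ (Set.Icc t (s n))).toReal) atTop (𝓝 L) ∧
        Tendsto (fun n => dist (γ t) (γ (s n))) atTop (𝓝 L)) := by
  constructor
  · exact fun s hs hst => my_left I hI γ hγ t ht s hs hst
  · intro s hs hst
    -- reflect
    set I' : Set ℝ := (fun x => -x) ⁻¹' I with hI'def
    have hI' : I'.OrdConnected := by
      constructor
      intro x hx y hy z hz
      exact hI.out hy hx ⟨neg_le_neg hz.2, neg_le_neg hz.1⟩
    set γ' : ℝ → X := fun x => γ (-x) with hγ'def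
    have key : ∀ a b : ℝ, a ≤ b → eVariationOn γ' (Icc a b) = eVariationOn γ (Icc (-b) (-a)) := by
      intro a b hab
      have : eVariationOn (γ ∘ Neg.neg) (Icc a b) = eVariationOn γ (Neg.neg '' Icc a b) :=
        eVariationOn.comp_eq_of_antitoneOn γ Neg.neg (fun x _ y _ hxy => neg_le_neg hxy)
      rwa [Set.image_neg_Icc] at this
    have hγ' : ∀ a ∈ I', ∀ b ∈ I', a ≤ b → eVariationOn γ' (Set.Icc a b) < ⊤ := by
      intro a ha b hb hab
      rw [key a b hab]
      exact hγ (-b) hb (-a) ha (neg_le_neg hab)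
    obtain ⟨L, hL1, hL2⟩ := my_left I' hI' γ' hγ' (-t) (by simpa [hI'def] using ht)
      (fun n => -(s n)) (fun n => ⟨by simpa [hI'def] using (hs n).1, neg_lt_neg (hs n).2⟩)
      (hst.neg)
    refine ⟨L, ?_, ?_⟩
    · convert hL1 using 2 with n
      rw [key _ _ (neg_le_neg (hs n).2.le)]
      norm_num
    · convert hL2 using 2 with n
      simp [hγ'def, dist_comm]
end

section
/- Let γ : I → X be locally of bounded variation, fix c ∈ I, and define V_γ : I → ℝ by V_γ(t) = Var(γ;[c,t]) for t ≥ c and V_γ(t) = −Var(γ;[t,c]) for t ≤ c. Then for every t ∈ I, γ is left-continuous at t if and only if V_γ is left-continuous at t, and γ is right-continuous at t if and only if V_γ is right-continuous at t. In particular, the set of discontinuity points of γ equals the set of discontinuity points of V_γ. -/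
open Filter Topology Set ENNReal

/-- Peeling a partition of `[s,t]` from the top: if `γ` moves by at most `C` from any point of
`[s,t)` to `t`, then any partition sum is bounded by the variation on some `[s,s']` with
`s' < t`, plus `C`. -/
private lemma aux_peel_top {X : Type*} [PseudoEMetricSpace X] (γ : ℝ → X) {s t : ℝ}
    (hst : s < t) {C : ℝ≥0∞} (hd : ∀ x ∈ Set.Ico s t, edist (γ x) (γ t) ≤ C)
    (n : ℕ) (u : ℕ → ℝ) (hu : Monotone u) (hmem : ∀ i, u i ∈ Set.Icc s t) :
    ∃ s' ∈ Set.Ico s t,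
      ∑ i ∈ Finset.range n, edist (γ (u (i + 1))) (γ (u i))
        ≤ eVariationOn γ (Set.Icc s s') + C := by
  induction n with
  | zero => exact ⟨s, ⟨le_rfl, hst⟩, by simp⟩
  | succ n ih =>
    rcases lt_or_eq_of_le (hmem (n + 1)).2 with h | h
    · refine ⟨u (n + 1), ⟨(hmem (n + 1)).1, h⟩, le_add_right ?_⟩
      have heq : ∑ i ∈ Finset.range (n + 1), edist (γ (u (i + 1))) (γ (u i))
          = ∑ i ∈ Finset.range (n + 1),
              edist (γ ((fun j => u (min j (n + 1))) (i + 1)))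
                (γ ((fun j => u (min j (n + 1))) i)) := by
        refine Finset.sum_congr rfl fun i hi => ?_
        have hi' := Finset.mem_range.1 hi
        simp only [min_eq_left (by omega : i + 1 ≤ n + 1), min_eq_left (by omega : i ≤ n + 1)]
      rw [heq]
      refine eVariationOn.sum_le (f := γ) (hu.comp fun a b hab => min_le_min hab le_rfl) fun i => ?_
      exact ⟨(hmem _).1, hu (min_le_right i (n + 1))⟩
    · rcases lt_or_eq_of_le (hmem n).2 with h' | h'
      · refine ⟨u n, ⟨(hmem n).1, h'⟩, ?_⟩
        rw [Finset.sum_range_succ]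
        have h1 : ∑ i ∈ Finset.range n, edist (γ (u (i + 1))) (γ (u i))
            ≤ eVariationOn γ (Set.Icc s (u n)) := by
          have heq : ∑ i ∈ Finset.range n, edist (γ (u (i + 1))) (γ (u i))
              = ∑ i ∈ Finset.range n,
                  edist (γ ((fun j => u (min j n)) (i + 1))) (γ ((fun j => u (min j n)) i)) := by
            refine Finset.sum_congr rfl fun i hi => ?_
            have hi' := Finset.mem_range.1 hi
            simp only [min_eq_left (by omega : i + 1 ≤ n), min_eq_left (by omega : i ≤ n)]
          rw [heq]
          refine eVariationOn.sum_le (f := γ) (hu.comp fun a b hab => min_le_min hab le_rfl) fun i => ?_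
          exact ⟨(hmem _).1, hu (min_le_right i n)⟩
        have h2 : edist (γ (u (n + 1))) (γ (u n)) ≤ C := by
          rw [h, edist_comm]
          exact hd (u n) ⟨(hmem n).1, h'⟩
        exact add_le_add h1 h2
      · obtain ⟨s', hs', hsum⟩ := ih
        refine ⟨s', hs', ?_⟩
        rw [Finset.sum_range_succ, h, h', edist_self, add_zero]
        exact hsum

/-- Peeling a partition of `[t,s]` from the bottom: mirror image of `aux_peel_top`. -/
private lemma aux_peel_bot {X : Type*} [PseudoEMetricSpace X] (γ : ℝ → X) {s t : ℝ}
    (hst : t < s) {C : ℝ≥0∞} (hd : ∀ x ∈ Set.Ioc t s, edist (γ x) (γ t) ≤ C) :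
    ∀ (n : ℕ) (u : ℕ → ℝ), Monotone u → (∀ i, u i ∈ Set.Icc t s) →
    ∃ s' ∈ Set.Ioc t s,
      ∑ i ∈ Finset.range n, edist (γ (u (i + 1))) (γ (u i))
        ≤ eVariationOn γ (Set.Icc s' s) + C := by
  intro n
  induction n with
  | zero => exact fun u _ _ => ⟨s, ⟨hst, le_rfl⟩, by simp⟩
  | succ n ih =>
    intro u hu hmem
    rcases lt_or_eq_of_le (hmem 0).1 with h | h
    · refine ⟨u 0, ⟨h, (hmem 0).2⟩, le_add_right ?_⟩
      exact eVariationOn.sum_le (f := γ) hu fun i => ⟨hu (Nat.zero_le i), (hmem i).2⟩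
    · rcases lt_or_eq_of_le (hmem 1).1 with h' | h'
      · refine ⟨u 1, ⟨h', (hmem 1).2⟩, ?_⟩
        rw [Finset.sum_range_succ']
        have h1 : ∑ i ∈ Finset.range n, edist (γ (u (i + 1 + 1))) (γ (u (i + 1)))
            ≤ eVariationOn γ (Set.Icc (u 1) s) :=
          eVariationOn.sum_le (f := γ) (n := n) (u := fun i => u (i + 1))
            (hu.comp fun a b hab => Nat.succ_le_succ hab)
            (fun i => ⟨hu (Nat.succ_le_succ (Nat.zero_le i)), (hmem _).2⟩)
        have h2 : edist (γ (u (0 + 1))) (γ (u 0)) ≤ C := by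
          rw [← h]
          exact hd (u (0 + 1)) ⟨h', (hmem 1).2⟩
        exact add_le_add h1 h2
      · obtain ⟨s', hs', hsum⟩ := ih (fun i => u (i + 1))
          (hu.comp fun a b hab => Nat.succ_le_succ hab) (fun i => hmem (i + 1))
        refine ⟨s', hs', ?_⟩
        rw [Finset.sum_range_succ']
        have hz : edist (γ (u (0 + 1))) (γ (u 0)) = 0 := by
          rw [← h, ← h']
          exact edist_self _
        rw [hz, add_zero]
        exact hsum

/-- If `γ` is left-continuous at `t` within `I`, the variation of `γ` on `[s,t]` can be made
arbitrarily small by taking `s < t` close to `t` in `I`. -/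
private lemma small_left {X : Type*} [MetricSpace X] {I : Set ℝ} (hI : I.OrdConnected)
    {γ : ℝ → X}
    (hγ : ∀ a ∈ I, ∀ b ∈ I, a ≤ b → eVariationOn γ (Set.Icc a b) < ⊤)
    {t : ℝ} (ht : t ∈ I) (hne : (𝓝[I ∩ Set.Iio t] t).NeBot)
    (hcont : ContinuousWithinAt γ (I ∩ Set.Iio t) t) {ε : ℝ} (hε : 0 < ε) :
    ∃ s ∈ I ∩ Set.Iio t, eVariationOn γ (Set.Icc s t) < ENNReal.ofReal ε := by
  by_contra hcon
  push_neg at hcon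
  set c₀ := ε / 4 with hc₀def
  have hc₀ : 0 < c₀ := by positivity
  have hev : ∀ᶠ x in 𝓝[I ∩ Set.Iio t] t, dist (γ x) (γ t) < c₀ :=
    Metric.tendsto_nhds.mp hcont c₀ hc₀
  obtain ⟨U, hUo, htU, hUsub⟩ := mem_nhdsWithin.mp hev
  obtain ⟨δ, hδ, hball⟩ := Metric.isOpen_iff.mp hUo t htU
  have hmem : (Set.Ioi (t - δ) ∩ (I ∩ Set.Iio t)) ∈ 𝓝[I ∩ Set.Iio t] t :=
    inter_mem (nhdsWithin_le_nhds (Ioi_mem_nhds (by linarith))) self_mem_nhdsWithin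
  obtain ⟨s₀, hs₀1, hs₀2⟩ := Filter.nonempty_of_mem hmem
  have hd : ∀ x ∈ Set.Ico s₀ t, edist (γ x) (γ t) ≤ ENNReal.ofReal c₀ := by
    intro x hx
    have hxI : x ∈ I := hI.out hs₀2.1 ht ⟨hx.1, hx.2.le⟩
    have hxU : x ∈ U := by
      apply hball
      simp only [Metric.mem_ball, Real.dist_eq, abs_sub_lt_iff]
      constructor
      · linarith [hx.2]
      · have := hs₀1
        simp only [Set.mem_Ioi] at this
        linarith [hx.1]
    have hdx : dist (γ x) (γ t) < c₀ := hUsub ⟨hxU, hxI, hx.2⟩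
    rw [edist_dist]
    exact ENNReal.ofReal_le_ofReal hdx.le
  have key : ∀ n : ℕ, ∃ s, s ∈ Set.Ico s₀ t ∧
      ENNReal.ofReal (n * (2 * c₀)) ≤ eVariationOn γ (Set.Icc s₀ s) := by
    intro n
    induction n with
    | zero => exact ⟨s₀, ⟨le_rfl, hs₀2.2⟩, by simp⟩
    | succ n ihn =>
      obtain ⟨s, hs, hvar⟩ := ihn
      have hsI : s ∈ I := hI.out hs₀2.1 ht ⟨hs.1, hs.2.le⟩
      have hbig : ENNReal.ofReal (3 * c₀) < eVariationOn γ (Set.Icc s t) := by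
        refine lt_of_lt_of_le ?_ (hcon s ⟨hsI, hs.2⟩)
        rw [ENNReal.ofReal_lt_ofReal_iff hε]
        rw [hc₀def]; linarith
      rw [eVariationOn, lt_iSup_iff] at hbig
      obtain ⟨⟨m, u, hu, hmemu⟩, hsum⟩ := hbig
      obtain ⟨s', hs', hle⟩ :=
        aux_peel_top γ hs.2 (fun x hx => hd x ⟨le_trans hs.1 hx.1, hx.2⟩) m u hu hmemu
      have h2 : ENNReal.ofReal (2 * c₀) < eVariationOn γ (Set.Icc s s') := by
        have h3 : ENNReal.ofReal (2 * c₀) + ENNReal.ofReal c₀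
            < eVariationOn γ (Set.Icc s s') + ENNReal.ofReal c₀ := by
          rw [← ENNReal.ofReal_add (by positivity) hc₀.le]
          have h23 : 2 * c₀ + c₀ = 3 * c₀ := by ring
          rw [h23]
          exact lt_of_lt_of_le hsum hle
        exact (ENNReal.add_lt_add_iff_right ENNReal.ofReal_ne_top).mp h3
      have hsplit : eVariationOn γ (Set.Icc s₀ s) + eVariationOn γ (Set.Icc s s')
          = eVariationOn γ (Set.Icc s₀ s') := by
        have := eVariationOn.Icc_add_Icc γ (s := Set.univ) hs.1 hs'.1 (Set.mem_univ s)
        simpa using this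
      refine ⟨s', ⟨le_trans hs.1 hs'.1, hs'.2⟩, ?_⟩
      have hcast : ((n + 1 : ℕ) : ℝ) * (2 * c₀) = n * (2 * c₀) + 2 * c₀ := by
        push_cast; ring
      rw [hcast, ENNReal.ofReal_add (by positivity) (by positivity), ← hsplit]
      exact add_le_add hvar h2.le
  obtain ⟨n, hn⟩ := exists_nat_gt ((eVariationOn γ (Set.Icc s₀ t)).toReal / (2 * c₀))
  obtain ⟨s, hs, hvar⟩ := key n
  have hfin : eVariationOn γ (Set.Icc s₀ t) ≠ ⊤ := (hγ s₀ hs₀2.1 t ht hs₀2.2.le).ne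
  have hle : eVariationOn γ (Set.Icc s₀ s) ≤ eVariationOn γ (Set.Icc s₀ t) :=
    eVariationOn.mono γ (Set.Icc_subset_Icc le_rfl hs.2.le)
  have hfinal : (n : ℝ) * (2 * c₀) ≤ (eVariationOn γ (Set.Icc s₀ t)).toReal := by
    rw [← ENNReal.ofReal_le_iff_le_toReal hfin]
    exact hvar.trans hle
  have h2c : (0 : ℝ) < 2 * c₀ := by positivity
  rw [div_lt_iff₀ h2c] at hn
  linarith

/-- If `γ` is right-continuous at `t` within `I`, the variation of `γ` on `[t,s]` can be made
arbitrarily small by taking `s > t` close to `t` in `I`. -/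
private lemma small_right {X : Type*} [MetricSpace X] {I : Set ℝ} (hI : I.OrdConnected)
    {γ : ℝ → X}
    (hγ : ∀ a ∈ I, ∀ b ∈ I, a ≤ b → eVariationOn γ (Set.Icc a b) < ⊤)
    {t : ℝ} (ht : t ∈ I) (hne : (𝓝[I ∩ Set.Ioi t] t).NeBot)
    (hcont : ContinuousWithinAt γ (I ∩ Set.Ioi t) t) {ε : ℝ} (hε : 0 < ε) :
    ∃ s ∈ I ∩ Set.Ioi t, eVariationOn γ (Set.Icc t s) < ENNReal.ofReal ε := by
  by_contra hcon
  push_neg at hcon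
  set c₀ := ε / 4 with hc₀def
  have hc₀ : 0 < c₀ := by positivity
  have hev : ∀ᶠ x in 𝓝[I ∩ Set.Ioi t] t, dist (γ x) (γ t) < c₀ :=
    Metric.tendsto_nhds.mp hcont c₀ hc₀
  obtain ⟨U, hUo, htU, hUsub⟩ := mem_nhdsWithin.mp hev
  obtain ⟨δ, hδ, hball⟩ := Metric.isOpen_iff.mp hUo t htU
  have hmem : (Set.Iio (t + δ) ∩ (I ∩ Set.Ioi t)) ∈ 𝓝[I ∩ Set.Ioi t] t :=
    inter_mem (nhdsWithin_le_nhds (Iio_mem_nhds (by linarith))) self_mem_nhdsWithin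
  obtain ⟨s₀, hs₀1, hs₀2⟩ := Filter.nonempty_of_mem hmem
  have hd : ∀ x ∈ Set.Ioc t s₀, edist (γ x) (γ t) ≤ ENNReal.ofReal c₀ := by
    intro x hx
    have hxI : x ∈ I := hI.out ht hs₀2.1 ⟨hx.1.le, hx.2⟩
    have hxU : x ∈ U := by
      apply hball
      simp only [Metric.mem_ball, Real.dist_eq, abs_sub_lt_iff]
      have hlt : s₀ < t + δ := hs₀1
      constructor
      · linarith [hx.2]
      · linarith [hx.1]
    have hdx : dist (γ x) (γ t) < c₀ := hUsub ⟨hxU, hxI, hx.1⟩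
    rw [edist_dist]
    exact ENNReal.ofReal_le_ofReal hdx.le
  have key : ∀ n : ℕ, ∃ s, s ∈ Set.Ioc t s₀ ∧
      ENNReal.ofReal (n * (2 * c₀)) ≤ eVariationOn γ (Set.Icc s s₀) := by
    intro n
    induction n with
    | zero => exact ⟨s₀, ⟨hs₀2.2, le_rfl⟩, by simp⟩
    | succ n ihn =>
      obtain ⟨s, hs, hvar⟩ := ihn
      have hsI : s ∈ I := hI.out ht hs₀2.1 ⟨hs.1.le, hs.2⟩
      have hbig : ENNReal.ofReal (3 * c₀) < eVariationOn γ (Set.Icc t s) := by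
        refine lt_of_lt_of_le ?_ (hcon s ⟨hsI, hs.1⟩)
        rw [ENNReal.ofReal_lt_ofReal_iff hε]
        rw [hc₀def]; linarith
      rw [eVariationOn, lt_iSup_iff] at hbig
      obtain ⟨⟨m, u, hu, hmemu⟩, hsum⟩ := hbig
      obtain ⟨s', hs', hle⟩ :=
        aux_peel_bot γ hs.1 (fun x hx => hd x ⟨hx.1, le_trans hx.2 hs.2⟩) m u hu hmemu
      have h2 : ENNReal.ofReal (2 * c₀) < eVariationOn γ (Set.Icc s' s) := by
        have h3 : ENNReal.ofReal (2 * c₀) + ENNReal.ofReal c₀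
            < eVariationOn γ (Set.Icc s' s) + ENNReal.ofReal c₀ := by
          rw [← ENNReal.ofReal_add (by positivity) hc₀.le]
          have h23 : 2 * c₀ + c₀ = 3 * c₀ := by ring
          rw [h23]
          exact lt_of_lt_of_le hsum hle
        exact (ENNReal.add_lt_add_iff_right ENNReal.ofReal_ne_top).mp h3
      have hsplit : eVariationOn γ (Set.Icc s' s) + eVariationOn γ (Set.Icc s s₀)
          = eVariationOn γ (Set.Icc s' s₀) := by
        have := eVariationOn.Icc_add_Icc γ (s := Set.univ) hs'.2 hs.2 (Set.mem_univ s)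
        simpa using this
      refine ⟨s', ⟨hs'.1, le_trans hs'.2 hs.2⟩, ?_⟩
      have hcast : ((n + 1 : ℕ) : ℝ) * (2 * c₀) = n * (2 * c₀) + 2 * c₀ := by
        push_cast; ring
      rw [hcast, ENNReal.ofReal_add (by positivity) (by positivity), ← hsplit]
      rw [add_comm (ENNReal.ofReal (↑n * (2 * c₀)))]
      exact add_le_add h2.le hvar
  obtain ⟨n, hn⟩ := exists_nat_gt ((eVariationOn γ (Set.Icc t s₀)).toReal / (2 * c₀))
  obtain ⟨s, hs, hvar⟩ := key n
  have hfin : eVariationOn γ (Set.Icc t s₀) ≠ ⊤ := (hγ t ht s₀ hs₀2.1 hs₀2.2.le).ne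
  have hle : eVariationOn γ (Set.Icc s s₀) ≤ eVariationOn γ (Set.Icc t s₀) :=
    eVariationOn.mono γ (Set.Icc_subset_Icc hs.1.le le_rfl)
  have hfinal : (n : ℝ) * (2 * c₀) ≤ (eVariationOn γ (Set.Icc t s₀)).toReal := by
    rw [← ENNReal.ofReal_le_iff_le_toReal hfin]
    exact hvar.trans hle
  have h2c : (0 : ℝ) < 2 * c₀ := by positivity
  rw [div_lt_iff₀ h2c] at hn
  linarith

/-- Continuity within a set containing `t` decomposes into left and right continuity. -/
private lemma cwa_iff {Y : Type*} [TopologicalSpace Y] {I : Set ℝ} {t : ℝ} (ht : t ∈ I)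
    (f : ℝ → Y) :
    ContinuousWithinAt f I t ↔
      ContinuousWithinAt f (I ∩ Set.Iio t) t ∧ ContinuousWithinAt f (I ∩ Set.Ioi t) t := by
  have hset : (I ∩ Set.Iio t) ∪ ((I ∩ Set.Ioi t) ∪ {t}) = I := by
    ext x
    simp only [Set.mem_union, Set.mem_inter_iff, Set.mem_Iio, Set.mem_Ioi, Set.mem_singleton_iff]
    constructor
    · rintro (⟨h, _⟩ | ⟨h, _⟩ | rfl)
      · exact h
      · exact h
      · exact ht
    · intro hx
      rcases lt_trichotomy x t with h | h | h
      · exact Or.inl ⟨hx, h⟩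
      · exact Or.inr (Or.inr h)
      · exact Or.inr (Or.inl ⟨hx, h⟩)
  conv_lhs => rw [← hset]
  rw [continuousWithinAt_union, continuousWithinAt_union]
  constructor
  · rintro ⟨h1, h2, _⟩
    exact ⟨h1, h2⟩
  · rintro ⟨h1, h2⟩
    exact ⟨h1, h2, continuousWithinAt_singleton⟩

/-- For `γ` locally of bounded variation and the signed variation function
`V_γ` based at `c ∈ I`, `γ` is left- (resp. right-) continuous at `t ∈ I` iff `V_γ` is,
and the discontinuity sets of `γ` and `V_γ` (within `I`) coincide. -/
theorem continuity_of_variation_function {X : Type*} [MetricSpace X]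
    (I : Set ℝ) (hI : I.OrdConnected) (γ : ℝ → X)
    (hγ : ∀ a ∈ I, ∀ b ∈ I, a ≤ b → eVariationOn γ (Set.Icc a b) < ⊤)
    (c : ℝ) (hc : c ∈ I) (V : ℝ → ℝ)
    (hV₁ : ∀ t ∈ I, c ≤ t → V t = (eVariationOn γ (Set.Icc c t)).toReal)
    (hV₂ : ∀ t ∈ I, t ≤ c → V t = -(eVariationOn γ (Set.Icc t c)).toReal) :
    (∀ t ∈ I,
      (ContinuousWithinAt γ (I ∩ Set.Iio t) t ↔ ContinuousWithinAt V (I ∩ Set.Iio t) t) ∧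
      (ContinuousWithinAt γ (I ∩ Set.Ioi t) t ↔ ContinuousWithinAt V (I ∩ Set.Ioi t) t)) ∧
    {t ∈ I | ¬ ContinuousWithinAt γ I t} = {t ∈ I | ¬ ContinuousWithinAt V I t} := by
  -- difference formula for V
  have hdiff : ∀ s ∈ I, ∀ u ∈ I, s ≤ u →
      V u - V s = (eVariationOn γ (Set.Icc s u)).toReal := by
    intro s hs u hu hsu
    rcases le_total c s with hcs | hsc
    · rw [hV₁ u hu (hcs.trans hsu), hV₁ s hs hcs]
      have hsplit := eVariationOn.Icc_add_Icc γ (s := Set.univ) hcs hsu (Set.mem_univ s)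
      simp only [Set.univ_inter] at hsplit
      rw [← hsplit, ENNReal.toReal_add (hγ c hc s hs hcs).ne (hγ s hs u hu hsu).ne]
      ring
    · rcases le_total c u with hcu | huc
      · rw [hV₁ u hu hcu, hV₂ s hs hsc]
        have hsplit := eVariationOn.Icc_add_Icc γ (s := Set.univ) hsc hcu (Set.mem_univ c)
        simp only [Set.univ_inter] at hsplit
        rw [← hsplit, ENNReal.toReal_add (hγ s hs c hc hsc).ne (hγ c hc u hu hcu).ne]
        ring
      · rw [hV₂ u hu huc, hV₂ s hs (hsu.trans huc)]
        have hsplit := eVariationOn.Icc_add_Icc γ (s := Set.univ) hsu huc (Set.mem_univ u)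
        simp only [Set.univ_inter] at hsplit
        rw [← hsplit, ENNReal.toReal_add (hγ s hs u hu hsu).ne (hγ u hu c hc huc).ne]
        ring
  have hmono : MonotoneOn V I := by
    intro s hs u hu hsu
    have h := hdiff s hs u hu hsu
    have := ENNReal.toReal_nonneg (a := eVariationOn γ (Set.Icc s u))
    linarith
  have hdist : ∀ s ∈ I, ∀ u ∈ I, s ≤ u → dist (γ s) (γ u) ≤ V u - V s := by
    intro s hs u hu hsu
    rw [hdiff s hs u hu hsu]
    have h1 : edist (γ s) (γ u) ≤ eVariationOn γ (Set.Icc s u) :=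
      eVariationOn.edist_le γ (Set.left_mem_Icc.2 hsu) (Set.right_mem_Icc.2 hsu)
    rw [dist_edist]
    exact ENNReal.toReal_mono (hγ s hs u hu hsu).ne h1
  -- V continuous ⇒ γ continuous (left)
  have VtoγL : ∀ t ∈ I, ContinuousWithinAt V (I ∩ Set.Iio t) t →
      ContinuousWithinAt γ (I ∩ Set.Iio t) t := by
    intro t ht hV
    rw [ContinuousWithinAt, tendsto_iff_dist_tendsto_zero] at hV ⊢
    refine squeeze_zero' (eventually_mem_nhdsWithin.mono fun x _ => dist_nonneg) ?_ hV
    refine eventually_mem_nhdsWithin.mono fun x hx => ?_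
    have h := hdist x hx.1 t ht hx.2.le
    have h2 := hmono hx.1 ht hx.2.le
    rw [Real.dist_eq, abs_of_nonpos (by linarith)]
    linarith
  have VtoγR : ∀ t ∈ I, ContinuousWithinAt V (I ∩ Set.Ioi t) t →
      ContinuousWithinAt γ (I ∩ Set.Ioi t) t := by
    intro t ht hV
    rw [ContinuousWithinAt, tendsto_iff_dist_tendsto_zero] at hV ⊢
    refine squeeze_zero' (eventually_mem_nhdsWithin.mono fun x _ => dist_nonneg) ?_ hV
    refine eventually_mem_nhdsWithin.mono fun x hx => ?_
    have h := hdist t ht x hx.1 hx.2.le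
    have h2 := hmono ht hx.1 hx.2.le
    rw [dist_comm (γ x), dist_comm (V x), Real.dist_eq, abs_of_nonpos (by linarith)]
    linarith
  -- γ continuous ⇒ V continuous (left)
  have γtoVL : ∀ t ∈ I, ContinuousWithinAt γ (I ∩ Set.Iio t) t →
      ContinuousWithinAt V (I ∩ Set.Iio t) t := by
    intro t ht hγc
    rcases Filter.eq_or_neBot (𝓝[I ∩ Set.Iio t] t) with hbot | hne
    · rw [ContinuousWithinAt, hbot]
      exact tendsto_bot
    · rw [ContinuousWithinAt, Metric.tendsto_nhds]
      intro ε hε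
      obtain ⟨s, hsmem, hsvar⟩ := small_left hI hγ ht hne hγc hε
      have hVts : V t - V s < ε := by
        rw [hdiff s hsmem.1 t ht hsmem.2.le]
        exact (ENNReal.lt_ofReal_iff_toReal_lt (hγ s hsmem.1 t ht hsmem.2.le).ne).mp hsvar
      have h1 : ∀ᶠ x in 𝓝[I ∩ Set.Iio t] t, s < x :=
        eventually_nhdsWithin_of_eventually_nhds (eventually_gt_nhds hsmem.2)
      filter_upwards [h1, self_mem_nhdsWithin] with x hx1 hx2
      have hVsx := hmono hsmem.1 hx2.1 hx1.le
      have hVxt := hmono hx2.1 ht hx2.2.le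
      rw [Real.dist_eq, abs_of_nonpos (by linarith)]
      linarith
  have γtoVR : ∀ t ∈ I, ContinuousWithinAt γ (I ∩ Set.Ioi t) t →
      ContinuousWithinAt V (I ∩ Set.Ioi t) t := by
    intro t ht hγc
    rcases Filter.eq_or_neBot (𝓝[I ∩ Set.Ioi t] t) with hbot | hne
    · rw [ContinuousWithinAt, hbot]
      exact tendsto_bot
    · rw [ContinuousWithinAt, Metric.tendsto_nhds]
      intro ε hε
      obtain ⟨s, hsmem, hsvar⟩ := small_right hI hγ ht hne hγc hε
      have hVts : V s - V t < ε := by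
        have hfin := (hγ t ht s hsmem.1 hsmem.2.le).ne
        rw [hdiff t ht s hsmem.1 hsmem.2.le]
        exact (ENNReal.lt_ofReal_iff_toReal_lt hfin).mp hsvar
      have h1 : ∀ᶠ x in 𝓝[I ∩ Set.Ioi t] t, x < s :=
        eventually_nhdsWithin_of_eventually_nhds (eventually_lt_nhds hsmem.2)
      filter_upwards [h1, self_mem_nhdsWithin] with x hx1 hx2
      have hVsx := hmono hx2.1 hsmem.1 hx1.le
      have hVxt := hmono ht hx2.1 hx2.2.le
      rw [Real.dist_eq, abs_of_nonneg (by linarith)]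
      linarith
  have main : ∀ t ∈ I,
      (ContinuousWithinAt γ (I ∩ Set.Iio t) t ↔ ContinuousWithinAt V (I ∩ Set.Iio t) t) ∧
      (ContinuousWithinAt γ (I ∩ Set.Ioi t) t ↔ ContinuousWithinAt V (I ∩ Set.Ioi t) t) :=
    fun t ht => ⟨⟨γtoVL t ht, VtoγL t ht⟩, ⟨γtoVR t ht, VtoγR t ht⟩⟩
  refine ⟨main, ?_⟩
  have hiff : ∀ x ∈ I, (ContinuousWithinAt γ I x ↔ ContinuousWithinAt V I x) := by
    intro x hx
    rw [cwa_iff hx γ, cwa_iff hx V, (main x hx).1, (main x hx).2]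
  ext x
  simp only [Set.mem_setOf_eq]
  exact and_congr_right fun hx => not_congr (hiff x hx)
end

section
/- Let γ : I → X be locally of bounded variation, let t ∈ I be a point at which γ is not left-continuous, and let a ∈ I with a < t. Then Var(γ;(a,t]) = Var(γ;(a,t)) + d(γ(t−),γ(t)), where d(γ(t−),γ(t)) denotes the (existing) limit lim_{s↗t} d(γ(s),γ(t)); in particular Var(γ;(a,t]) > Var(γ;(a,t)) + Var(γ;{t}), so Var(γ;·) fails to be additive at t. -/
open Filter Topology Set
open scoped ENNReal

private lemma trunc_sum_le {X : Type*} [PseudoEMetricSpace X] (f : ℝ → X) {s : Set ℝ}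
    {n : ℕ} {u : ℕ → ℝ} (hu : Monotone u) (us : ∀ i ≤ n, u i ∈ s) :
    ∑ i ∈ Finset.range n, edist (f (u (i + 1))) (f (u i)) ≤ eVariationOn f s := by
  set v : ℕ → ℝ := fun i => u (min i n) with hv
  have hvmono : Monotone v := hu.comp (fun i j hij => min_le_min hij le_rfl)
  have hvs : ∀ i, v i ∈ s := fun i => us _ (min_le_right _ _)
  have hsum : ∑ i ∈ Finset.range n, edist (f (u (i + 1))) (f (u i))
      = ∑ i ∈ Finset.range n, edist (f (v (i + 1))) (f (v i)) := by
    apply Finset.sum_congr rfl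
    intro i hi
    have hi' : i < n := Finset.mem_range.1 hi
    simp only [hv, min_eq_left hi'.le, min_eq_left (Nat.succ_le_of_lt hi')]
  rw [hsum]
  exact eVariationOn.sum_le (f := f) (n := n) hvmono hvs

private lemma var_split {X : Type*} [PseudoEMetricSpace X] (f : ℝ → X) {a s t : ℝ}
    (h1 : a < s) (h2 : s ≤ t) :
    eVariationOn f (Ioc a t) = eVariationOn f (Ioc a s) + eVariationOn f (Icc s t) := by
  rw [← Ioc_union_Icc_eq_Ioc h1 h2]
  exact eVariationOn.union f ⟨⟨h1, le_rfl⟩, fun y hy => hy.2⟩ ⟨⟨le_rfl, h2⟩, fun y hy => hy.1⟩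

/-- If `γ` is locally of bounded variation, `t ∈ I` is a point where `γ` is
not left-continuous, and `a ∈ I` with `a < t`, then the limit
`d(γ(t-),γ(t)) = lim_{s↗t} d(γ(s),γ(t))` exists,
`Var(γ;(a,t]) = Var(γ;(a,t)) + d(γ(t-),γ(t))`, and in particular
`Var(γ;(a,t]) > Var(γ;(a,t)) + Var(γ;{t})`. -/
theorem variation_not_additive_left {X : Type*} [MetricSpace X]
    (I : Set ℝ) (hI : I.OrdConnected) (γ : ℝ → X)
    (hγ : ∀ a ∈ I, ∀ b ∈ I, a ≤ b → eVariationOn γ (Set.Icc a b) < ⊤)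
    (t : ℝ) (ht : t ∈ I)
    (hdisc : ¬ ContinuousWithinAt γ (I ∩ Set.Iio t) t)
    (a : ℝ) (ha : a ∈ I) (hat : a < t) :
    ∃ L : ℝ,
      Tendsto (fun s => dist (γ s) (γ t)) (𝓝[I ∩ Set.Iio t] t) (𝓝 L) ∧
      eVariationOn γ (Set.Ioc a t) = eVariationOn γ (Set.Ioo a t) + ENNReal.ofReal L ∧
      eVariationOn γ (Set.Ioo a t) + eVariationOn γ ({t} : Set ℝ)
        < eVariationOn γ (Set.Ioc a t) := by
  classical
  have hIcc : Icc a t ⊆ I := hI.out ha ht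
  -- the filter
  have hfilter : 𝓝[I ∩ Set.Iio t] t = 𝓝[<] t := by
    apply nhdsWithin_eq_nhdsWithin' (Ioi_mem_nhds hat)
    ext x
    constructor
    · rintro ⟨⟨-, hx2⟩, hx3⟩; exact ⟨hx2, hx3⟩
    · rintro ⟨hx1, hx2⟩
      exact ⟨⟨hIcc ⟨hx2.le, hx1.le⟩, hx1⟩, hx2⟩
  -- the monotone variation function
  set V : ℝ → ℝ≥0∞ := fun s => eVariationOn γ (Ioc a s) with hV
  have hVmono : Monotone V := fun s s' hss' =>
    eVariationOn.mono γ (Ioc_subset_Ioc_right hss')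
  set Vall : ℝ≥0∞ := eVariationOn γ (Ioo a t) with hVall
  set VT : ℝ≥0∞ := eVariationOn γ (Ioc a t) with hVT
  have hVTfin : VT < ⊤ :=
    lt_of_le_of_lt (eVariationOn.mono γ Ioc_subset_Icc_self) (hγ a ha t ht hat.le)
  have hVallfin : Vall < ⊤ :=
    lt_of_le_of_lt (eVariationOn.mono γ Ioo_subset_Ioc_self) hVTfin
  have hVle : ∀ s < t, V s ≤ Vall := fun s hs =>
    eVariationOn.mono γ (fun x hx => ⟨hx.1, lt_of_le_of_lt hx.2 hs⟩)
  -- key sup identity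
  have hsup : sSup (V '' Iio t) = Vall := by
    apply le_antisymm
    · apply sSup_le
      rintro x ⟨s, hs, rfl⟩
      exact hVle s hs
    · apply iSup_le
      rintro ⟨n, u, hu, us⟩
      rcases Nat.eq_zero_or_pos n with rfl | hn
      · simp
      have humem : u n ∈ Ioo a t := us n
      have hsum : ∑ i ∈ Finset.range n, edist (γ (u (i + 1))) (γ (u i)) ≤ V (u n) :=
        trunc_sum_le γ hu (fun i hi => ⟨(us i).1, hu hi⟩)
      exact hsum.trans (le_sSup ⟨u n, humem.2, rfl⟩)
  have htendV : Tendsto V (𝓝[<] t) (𝓝 Vall) := by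
    have := hVmono.tendsto_nhdsLT t
    rwa [hsup] at this
  -- oscillation bound
  have hosc : ∀ ε : ℝ≥0∞, 0 < ε → ∃ s ∈ Ioo a t,
      ∀ u ∈ Ico s t, ∀ v ∈ Ico s t, edist (γ u) (γ v) ≤ ε := by
    intro ε hε
    have key : ∃ s ∈ Ioo a t, Vall ≤ V s + ε := by
      rcases eq_or_ne Vall 0 with h0 | h0
      · exact ⟨(a + t) / 2, ⟨by linarith, by linarith⟩, by simp [h0]⟩
      by_contra hcon
      push_neg at hcon
      have hall : ∀ s < t, V s ≤ Vall - ε := by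
        intro s hs
        have hmid : (max s ((a + t) / 2)) ∈ Ioo a t := by
          constructor
          · exact lt_of_lt_of_le (by linarith) (le_max_right _ _)
          · exact max_lt hs (by linarith)
        have := hcon _ hmid
        have hVs : V s ≤ V (max s ((a + t) / 2)) := hVmono (le_max_left _ _)
        have hεtop : ε ≠ ⊤ := by
          intro hh
          rw [hh] at this; simp at this

        exact ENNReal.le_sub_of_add_le_right hεtop ((add_le_add_left hVs ε).trans this.le)
      have h2 : sSup (V '' Iio t) ≤ Vall - ε :=
        sSup_le (by rintro x ⟨s, hs, rfl⟩; exact hall s hs)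
      rw [hsup] at h2
      have : Vall ≤ Vall - ε := h2
      exact absurd (this.trans_lt (ENNReal.sub_lt_self hVallfin.ne h0 hε.ne'))
        (lt_irrefl _)
    obtain ⟨s, hs, hVs⟩ := key
    refine ⟨s, hs, ?_⟩
    have main : ∀ u ∈ Ico s t, ∀ v ∈ Ico s t, u ≤ v → edist (γ u) (γ v) ≤ ε := by
      intro u hu v hv huv
      have hau : a < u := lt_of_lt_of_le hs.1 hu.1
      have hsplit := var_split γ hau huv
      have hedist : edist (γ u) (γ v) ≤ eVariationOn γ (Icc u v) :=
        eVariationOn.edist_le γ ⟨le_rfl, huv⟩ ⟨huv, le_rfl⟩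
      have h1 : V u + eVariationOn γ (Icc u v) = V v := hsplit.symm
      have h2 : V v ≤ V u + ε := by
        calc V v ≤ Vall := hVle v hv.2
        _ ≤ V s + ε := hVs
        _ ≤ V u + ε := add_le_add_left (hVmono hu.1) ε
      have hVufin : V u ≠ ⊤ := ((hVle u hu.2).trans_lt hVallfin).ne
      have : eVariationOn γ (Icc u v) ≤ ε := by
        rw [← ENNReal.add_le_add_iff_left hVufin, h1]
        exact h2
      exact hedist.trans this
    intro u hu v hv
    rcases le_total u v with h | h
    · exact main u hu v hv h
    · rw [edist_comm]; exact main v hv u hu h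
  -- existence of the left limit L
  set F : ℝ → ℝ := fun s => dist (γ s) (γ t) with hF
  have hCauchy : Cauchy (map F (𝓝[<] t)) := by
    rw [Metric.cauchy_iff]
    refine ⟨map_neBot, fun ε hε => ?_⟩
    obtain ⟨s, hs, hss⟩ := hosc (ENNReal.ofReal (ε / 3)) (by positivity)
    refine ⟨F '' Ico s t, image_mem_map (Ico_mem_nhdsLT hs.2), ?_⟩
    rintro x ⟨u, hu, rfl⟩ y ⟨v, hv, rfl⟩
    have h1 : dist (γ u) (γ v) ≤ ε / 3 :=
      (edist_le_ofReal (by positivity)).1 (hss u hu v hv)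
    have h2 : dist (F u) (F v) ≤ dist (γ u) (γ v) := by
      rw [Real.dist_eq]
      exact abs_dist_sub_le _ _ _
    calc dist (F u) (F v) ≤ ε / 3 := h2.trans h1
    _ < ε := by linarith
  obtain ⟨L, hL⟩ : ∃ L, Tendsto F (𝓝[<] t) (𝓝 L) := CompleteSpace.complete hCauchy
  have hL0 : 0 ≤ L := ge_of_tendsto hL (Eventually.of_forall fun s => dist_nonneg)
  have hLpos : 0 < L := by
    rcases hL0.lt_or_eq with h | h
    · exact h
    · exfalso
      apply hdisc
      have : Tendsto γ (𝓝[<] t) (𝓝 (γ t)) := tendsto_iff_dist_tendsto_zero.2 (h ▸ hL)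
      rw [ContinuousWithinAt, hfilter]
      exact this
  have hE : Tendsto (fun s => edist (γ s) (γ t)) (𝓝[<] t) (𝓝 (ENNReal.ofReal L)) := by
    have := (ENNReal.continuous_ofReal.tendsto L).comp hL
    simpa [Function.comp_def, hF, edist_dist] using this
  -- lower bound
  have lower : Vall + ENNReal.ofReal L ≤ VT := by
    apply le_of_tendsto (htendV.add hE)
    filter_upwards [Ioo_mem_nhdsLT_of_mem (⟨hat, le_rfl⟩ : t ∈ Ioc a t)] with s hs
    have hsplit := var_split γ hs.1 hs.2.le
    have hedist : edist (γ s) (γ t) ≤ eVariationOn γ (Icc s t) :=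
      eVariationOn.edist_le γ ⟨le_rfl, hs.2.le⟩ ⟨hs.2.le, le_rfl⟩
    calc V s + edist (γ s) (γ t) ≤ V s + eVariationOn γ (Icc s t) :=
          add_le_add_right hedist _
    _ = VT := hsplit.symm
  -- upper bound
  have upper : VT ≤ Vall + ENNReal.ofReal L := by
    apply iSup_le
    rintro ⟨n, u, hu, us⟩
    by_cases hex : ∃ i, i ≤ n ∧ u i = t
    · obtain ⟨i₀, hi₀n, hi₀⟩ := hex
      have hexist : ∃ j, u j = t := ⟨i₀, hi₀⟩
      obtain ⟨k, hkt, hmin⟩ : ∃ k, u k = t ∧ ∀ j < k, u j ≠ t :=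
        ⟨Nat.find hexist, Nat.find_spec hexist, fun j hj => Nat.find_min hexist hj⟩
      have hkn : k ≤ n := (Nat.le_of_not_lt fun h => hmin i₀ h hi₀).trans hi₀n
      have hlt : ∀ j < k, u j < t := fun j hj =>
        lt_of_le_of_ne (us j).2 (hmin j hj)
      have hzero : ∀ i ∈ Finset.Ico k n, edist (γ (u (i + 1))) (γ (u i)) = 0 := by
        intro i hi
        have hi' := Finset.mem_Ico.1 hi
        have h1 : u i = t := le_antisymm (us i).2 (hkt ▸ hu hi'.1)
        have h2 : u (i + 1) = t := le_antisymm (us (i + 1)).2 (hkt ▸ hu (hi'.1.trans i.le_succ))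
        rw [h1, h2, edist_self]
      have hsplit : ∑ i ∈ Finset.range n, edist (γ (u (i + 1))) (γ (u i))
          = ∑ i ∈ Finset.range k, edist (γ (u (i + 1))) (γ (u i)) := by
        rw [Finset.range_eq_Ico, ← Finset.sum_Ico_consecutive _ (Nat.zero_le k) hkn,
          Finset.sum_congr rfl (fun i hi => hzero i hi), Finset.sum_const_zero, add_zero, Finset.range_eq_Ico]
      rw [hsplit]
      rcases Nat.eq_zero_or_pos k with hk0 | hk0
      · simp [hk0]
      obtain ⟨m, rfl⟩ : ∃ m, k = m + 1 := ⟨k - 1, (Nat.succ_pred_eq_of_pos hk0).symm⟩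
      set w := u m with hw
      have hwmem : w ∈ Ioo a t := ⟨(us m).1, hlt m m.lt_succ_self⟩
      have hsum1 : ∑ i ∈ Finset.range m, edist (γ (u (i + 1))) (γ (u i)) ≤ V w :=
        trunc_sum_le γ hu (fun i hi => ⟨(us i).1, hu hi⟩)
      rw [Finset.sum_range_succ, hkt]
      have hgoal : V w + edist (γ t) (γ w) ≤ Vall + ENNReal.ofReal L := by
        apply ge_of_tendsto (tendsto_const_nhds.add hE)
        filter_upwards [Ico_mem_nhdsLT hwmem.2,
          Ioo_mem_nhdsLT_of_mem (⟨hat, le_rfl⟩ : t ∈ Ioc a t)] with v hv hv'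
        have hsplit2 := var_split γ hwmem.1 hv.1
        have hd1 : edist (γ w) (γ v) ≤ eVariationOn γ (Icc w v) :=
          eVariationOn.edist_le γ ⟨le_rfl, hv.1⟩ ⟨hv.1, le_rfl⟩
        calc V w + edist (γ t) (γ w)
            ≤ V w + (edist (γ t) (γ v) + edist (γ v) (γ w)) :=
              add_le_add_right (edist_triangle _ _ _) _
        _ = (V w + edist (γ w) (γ v)) + edist (γ v) (γ t) := by
              rw [edist_comm (γ t) (γ v), edist_comm (γ v) (γ w)]; ring
        _ ≤ (V w + eVariationOn γ (Icc w v)) + edist (γ v) (γ t) :=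
              add_le_add_left (add_le_add_right hd1 _) _
        _ = V v + edist (γ v) (γ t) := by rw [← hsplit2]
        _ ≤ Vall + edist (γ v) (γ t) := add_le_add_left (hVle v hv'.2) _
      calc ∑ i ∈ Finset.range m, edist (γ (u (i + 1))) (γ (u i)) + edist (γ t) (γ (u m))
          ≤ V w + edist (γ t) (γ w) := add_le_add_left hsum1 _
      _ ≤ Vall + ENNReal.ofReal L := hgoal
    · push_neg at hex
      have : ∀ i ≤ n, u i ∈ Ioo a t := fun i hi =>
        ⟨(us i).1, lt_of_le_of_ne (us i).2 (hex i hi)⟩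
      calc ∑ i ∈ Finset.range n, edist (γ (u (i + 1))) (γ (u i))
          ≤ Vall := trunc_sum_le γ hu this
      _ ≤ Vall + ENNReal.ofReal L := le_self_add
  have heq : VT = Vall + ENNReal.ofReal L := le_antisymm upper lower
  refine ⟨L, ?_, heq, ?_⟩
  · rw [hfilter]; exact hL
  · rw [eVariationOn.subsingleton γ (subsingleton_singleton), add_zero, heq]
    exact ENNReal.lt_add_right hVallfin.ne (ENNReal.ofReal_pos.2 hLpos).ne'
end

section
/- Let γ : I → X be locally of bounded variation, let t ∈ I be a point at which γ is not right-continuous, and let b ∈ I with t < b. Then Var(γ;[t,b)) = Var(γ;(t,b)) + d(γ(t),γ(t+)), where d(γ(t),γ(t+)) denotes the (existing) limit lim_{s↘t} d(γ(t),γ(s)); in particular Var(γ;[t,b)) > Var(γ;(t,b)) + Var(γ;{t}). -/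
open Filter Topology Set
open scoped ENNReal

private lemma evar_Ioc_eq_iSup' {X : Type*} [MetricSpace X] (f : ℝ → X) (a c : ℝ) :
    eVariationOn f (Set.Ioc a c) = ⨆ s ∈ Set.Ioc a c, eVariationOn f (Set.Icc s c) := by
  apply le_antisymm
  · conv_lhs => rw [eVariationOn]
    apply iSup_le
    rintro ⟨n, u, hu, us⟩
    have h1 : ∀ i, u i ∈ Set.Icc (u 0) c := fun i => ⟨hu (Nat.zero_le i), (us i).2⟩
    calc ∑ i ∈ Finset.range n, edist (f (u (i+1))) (f (u i))
        ≤ eVariationOn f (Set.Icc (u 0) c) := eVariationOn.sum_le (f := f) (n := n) hu h1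
      _ ≤ ⨆ s ∈ Set.Ioc a c, eVariationOn f (Set.Icc s c) :=
          le_iSup₂_of_le (u 0) (us 0) le_rfl
  · exact iSup₂_le fun s hs => eVariationOn.mono f fun x hx => ⟨lt_of_lt_of_le hs.1 hx.1, hx.2⟩

private lemma evar_Ioo_eq_iSup' {X : Type*} [MetricSpace X] (f : ℝ → X) (a c : ℝ) :
    eVariationOn f (Set.Ioo a c) = ⨆ s ∈ Set.Ioo a c, eVariationOn f (Set.Ioc a s) := by
  apply le_antisymm
  · conv_lhs => rw [eVariationOn]
    apply iSup_le
    rintro ⟨n, u, hu, us⟩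
    set v : ℕ → ℝ := fun i => u (min i n) with hv
    have hvmono : Monotone v := fun i j h => hu (min_le_min h le_rfl)
    have hvmem : ∀ i, v i ∈ Set.Ioc a (u n) := fun i => ⟨(us _).1, hu (min_le_right i n)⟩
    have hsum : ∑ i ∈ Finset.range n, edist (f (u (i+1))) (f (u i))
        = ∑ i ∈ Finset.range n, edist (f (v (i+1))) (f (v i)) := by
      refine Finset.sum_congr rfl fun i hi => ?_
      have hi' := Finset.mem_range.1 hi
      have e1 : v (i+1) = u (i+1) := by simp [hv, min_eq_left (Nat.succ_le_of_lt hi')]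
      have e2 : v i = u i := by simp [hv, min_eq_left hi'.le]
      rw [e1, e2]
    rw [hsum]
    calc ∑ i ∈ Finset.range n, edist (f (v (i+1))) (f (v i))
        ≤ eVariationOn f (Set.Ioc a (u n)) := eVariationOn.sum_le (f := f) (n := n) hvmono hvmem
      _ ≤ ⨆ s ∈ Set.Ioo a c, eVariationOn f (Set.Ioc a s) :=
          le_iSup₂_of_le (u n) (us n) le_rfl
  · exact iSup₂_le fun s hs => eVariationOn.mono f fun x hx => ⟨hx.1, lt_of_le_of_lt hx.2 hs.2⟩

/-- If `γ` is locally of bounded variation, `t ∈ I` is a point where `γ` is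
not right-continuous, and `b ∈ I` with `t < b`, then the limit
`d(γ(t),γ(t+)) = lim_{s↘t} d(γ(t),γ(s))` exists,
`Var(γ;[t,b)) = Var(γ;(t,b)) + d(γ(t),γ(t+))`, and in particular
`Var(γ;[t,b)) > Var(γ;(t,b)) + Var(γ;{t})`. -/
theorem variation_not_additive_right {X : Type*} [MetricSpace X]
    (I : Set ℝ) (hI : I.OrdConnected) (γ : ℝ → X)
    (hγ : ∀ a ∈ I, ∀ b ∈ I, a ≤ b → eVariationOn γ (Set.Icc a b) < ⊤)
    (t : ℝ) (ht : t ∈ I)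
    (hdisc : ¬ ContinuousWithinAt γ (I ∩ Set.Ioi t) t)
    (b : ℝ) (hb : b ∈ I) (htb : t < b) :
    ∃ L : ℝ,
      Tendsto (fun s => dist (γ t) (γ s)) (𝓝[I ∩ Set.Ioi t] t) (𝓝 L) ∧
      eVariationOn γ (Set.Ico t b) = eVariationOn γ (Set.Ioo t b) + ENNReal.ofReal L ∧
      eVariationOn γ (Set.Ioo t b) + eVariationOn γ ({t} : Set ℝ)
        < eVariationOn γ (Set.Ico t b) := by
  classical
  have hIsub : Set.Icc t b ⊆ I := hI.out ht hb
  have hfin : eVariationOn γ (Set.Icc t b) < ⊤ := hγ t ht b hb htb.le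
  have hfin' : ∀ {A : Set ℝ}, A ⊆ Set.Icc t b → eVariationOn γ A < ⊤ :=
    fun hA => lt_of_le_of_lt (eVariationOn.mono γ hA) hfin
  set l := 𝓝[I ∩ Set.Ioi t] t with hl
  have hIoo : Set.Ioo t b ⊆ I ∩ Set.Ioi t := fun x hx => ⟨hIsub ⟨hx.1.le, hx.2.le⟩, hx.1⟩
  have hlne : l.NeBot := by
    have h1 : t ∈ closure (Set.Ioo t b) := by
      rw [closure_Ioo htb.ne]; exact ⟨le_rfl, htb.le⟩
    exact (mem_closure_iff_nhdsWithin_neBot.1 h1).mono (nhdsWithin_mono t hIoo)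
  -- the variation on `(t, s]` tends to `0` as `s ↓ t`
  have hm0 : ⨅ s ∈ Set.Ioo t b, eVariationOn γ (Set.Ioc t s) = 0 := by
    by_contra hm
    set m := ⨅ s ∈ Set.Ioo t b, eVariationOn γ (Set.Ioc t s) with hmdef
    obtain ⟨s₀, hs₀⟩ := nonempty_Ioo.2 htb
    have hmle : ∀ s ∈ Set.Ioo t b, m ≤ eVariationOn γ (Set.Ioc t s) :=
      fun s hs => iInf₂_le s hs
    have hmtop : m < ⊤ := lt_of_le_of_lt (hmle s₀ hs₀)
      (hfin' fun x hx => ⟨hx.1.le, hx.2.trans hs₀.2.le⟩)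
    set m' := m / 2 with hm'def
    have hm'0 : m' ≠ 0 := (ENNReal.half_pos hm).ne'
    have hm'lt : m' < m := ENNReal.half_lt_self hm hmtop.ne
    have key : ∀ n : ℕ, ∀ s ∈ Set.Ioo t b, (n : ℝ≥0∞) * m' ≤ eVariationOn γ (Set.Ioc t s) := by
      intro n
      induction n with
      | zero => intro s hs; simp
      | succ n ih =>
        intro s hs
        have h1 : m' < eVariationOn γ (Set.Ioc t s) := lt_of_lt_of_le hm'lt (hmle s hs)
        have h2 : ∃ p : ℕ × {u : ℕ → ℝ // Monotone u ∧ ∀ i, u i ∈ Set.Ioc t s},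
            m' < ∑ i ∈ Finset.range p.1, edist (γ (p.2.1 (i+1))) (γ (p.2.1 i)) := by
          rw [← lt_iSup_iff]; exact h1
        obtain ⟨⟨k, u, hu, us⟩, hsum⟩ := h2
        have hpt : t < u 0 := (us 0).1
        obtain ⟨p', hp'1, hp'2⟩ := exists_between hpt
        have hp's : p' ≤ s := (hp'2.le.trans (us 0).2)
        have hp'mem : p' ∈ Set.Ioo t b := ⟨hp'1, lt_of_le_of_lt hp's hs.2⟩
        have hsub : Set.Ioc t p' ∪ Set.Icc p' s ⊆ Set.Ioc t s := by
          rintro x (hx | hx)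
          · exact ⟨hx.1, hx.2.trans hp's⟩
          · exact ⟨lt_of_lt_of_le hp'1 hx.1, hx.2⟩
        have hunion : eVariationOn γ (Set.Ioc t p' ∪ Set.Icc p' s)
            = eVariationOn γ (Set.Ioc t p') + eVariationOn γ (Set.Icc p' s) :=
          eVariationOn.union γ (isGreatest_Ioc hp'1) (isLeast_Icc hp's)
        have hpart : ∑ i ∈ Finset.range k, edist (γ (u (i+1))) (γ (u i))
            ≤ eVariationOn γ (Set.Icc p' s) :=
          eVariationOn.sum_le (f := γ) (n := k) hu fun i =>
            ⟨hp'2.le.trans (hu (Nat.zero_le i)), (us i).2⟩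
        calc ((n + 1 : ℕ) : ℝ≥0∞) * m' = (n : ℝ≥0∞) * m' + m' := by push_cast; ring
          _ ≤ eVariationOn γ (Set.Ioc t p') + eVariationOn γ (Set.Icc p' s) :=
              add_le_add (ih p' hp'mem) (hsum.le.trans hpart)
          _ = eVariationOn γ (Set.Ioc t p' ∪ Set.Icc p' s) := hunion.symm
          _ ≤ eVariationOn γ (Set.Ioc t s) := eVariationOn.mono γ hsub
    have hV : eVariationOn γ (Set.Ioc t s₀) < ⊤ :=
      hfin' fun x hx => ⟨hx.1.le, hx.2.trans hs₀.2.le⟩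
    have hC : ∀ n : ℕ, (n : ℝ≥0∞) ≤ eVariationOn γ (Set.Ioc t s₀) / m' := fun n =>
      (ENNReal.le_div_iff_mul_le (Or.inl hm'0) (Or.inl (hm'lt.trans hmtop).ne)).2 (key n s₀ hs₀)
    have hCt : eVariationOn γ (Set.Ioc t s₀) / m' < ⊤ := ENNReal.div_lt_top hV.ne hm'0
    obtain ⟨n, hn⟩ := exists_nat_gt (eVariationOn γ (Set.Ioc t s₀) / m').toReal
    have h3 : (n : ℝ) ≤ (eVariationOn γ (Set.Ioc t s₀) / m').toReal := by
      have := ENNReal.toReal_mono hCt.ne (hC n)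
      simpa using this
    exact absurd h3 (not_le.2 hn)
  -- existence of the right limit of the distance function
  have hcauchy : Cauchy (Filter.map (fun s => dist (γ t) (γ s)) l) := by
    rw [Metric.cauchy_iff]
    refine ⟨Filter.map_neBot, fun ε hε => ?_⟩
    have h1 : (⨅ s ∈ Set.Ioo t b, eVariationOn γ (Set.Ioc t s)) < ENNReal.ofReal ε := by
      rw [hm0]; exact ENNReal.ofReal_pos.2 hε
    simp only [iInf_lt_iff] at h1
    obtain ⟨s₀, hs₀, hVs₀⟩ := h1
    refine ⟨(fun s => dist (γ t) (γ s)) '' ((I ∩ Set.Ioi t) ∩ Set.Iio s₀),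
      Filter.image_mem_map ?_, ?_⟩
    · exact inter_mem self_mem_nhdsWithin
        (mem_nhdsWithin_of_mem_nhds (Iio_mem_nhds hs₀.1))
    · rintro x ⟨s, hs, rfl⟩ y ⟨s', hs', rfl⟩
      have hsm : s ∈ Set.Ioc t s₀ := ⟨hs.1.2, hs.2.le⟩
      have hsm' : s' ∈ Set.Ioc t s₀ := ⟨hs'.1.2, hs'.2.le⟩
      have h2 : edist (γ s) (γ s') ≤ eVariationOn γ (Set.Ioc t s₀) :=
        eVariationOn.edist_le γ hsm hsm'
      have h3 : dist (γ s) (γ s') < ε := by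
        rw [← edist_lt_ofReal]; exact lt_of_le_of_lt h2 hVs₀
      calc dist (dist (γ t) (γ s)) (dist (γ t) (γ s'))
          = |dist (γ t) (γ s) - dist (γ t) (γ s')| := Real.dist_eq _ _
        _ ≤ dist (γ s) (γ s') := by
            simpa [dist_comm] using abs_dist_sub_le (γ s) (γ s') (γ t)
        _ < ε := h3
  obtain ⟨L, hL⟩ := CompleteSpace.complete hcauchy
  have hLt : Tendsto (fun s => dist (γ t) (γ s)) l (𝓝 L) := hL
  have hL0 : 0 ≤ L := ge_of_tendsto hLt (Eventually.of_forall fun s => dist_nonneg)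
  have hLne : L ≠ 0 := by
    intro h
    apply hdisc
    have h1 : Tendsto (fun s => dist (γ s) (γ t)) l (𝓝 0) := by
      simpa [dist_comm, h] using hLt
    exact tendsto_iff_dist_tendsto_zero.2 h1
  have hLpos : 0 < L := lt_of_le_of_ne hL0 (Ne.symm hLne)
  have hEt : Tendsto (fun s => edist (γ t) (γ s)) l (𝓝 (ENNReal.ofReal L)) := by
    simpa only [edist_dist] using ENNReal.tendsto_ofReal hLt
  -- the jump bound
  have hjump : ∀ c ∈ Set.Ioo t b,
      edist (γ t) (γ c) ≤ ENNReal.ofReal L + eVariationOn γ (Set.Ioc t c) := by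
    intro c hc
    have hev : ∀ᶠ s' in l,
        edist (γ t) (γ c) ≤ edist (γ t) (γ s') + eVariationOn γ (Set.Ioc t c) := by
      have h1 : ∀ᶠ s' in l, s' ∈ Set.Ioc t c := by
        filter_upwards [self_mem_nhdsWithin,
          mem_nhdsWithin_of_mem_nhds (Iio_mem_nhds hc.1)] with s' hs' hs''
        exact ⟨hs'.2, hs''.le⟩
      filter_upwards [h1] with s' hs'
      calc edist (γ t) (γ c) ≤ edist (γ t) (γ s') + edist (γ s') (γ c) := edist_triangle _ _ _
        _ ≤ edist (γ t) (γ s') + eVariationOn γ (Set.Ioc t c) :=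
            add_le_add_right (eVariationOn.edist_le γ hs' ⟨hc.1, le_rfl⟩) _
    exact ge_of_tendsto (hEt.add tendsto_const_nhds) hev
  -- main inequality ≤
  have key_le : eVariationOn γ (Set.Ico t b)
      ≤ eVariationOn γ (Set.Ioo t b) + ENNReal.ofReal L := by
    conv_lhs => rw [eVariationOn]
    apply iSup_le
    rintro ⟨n, u, hu, us⟩
    set v : ℕ → ℝ := fun i => u (min i n) with hv
    have hvmono : Monotone v := fun i j h => hu (min_le_min h le_rfl)
    have hvmem : ∀ i, v i ∈ Set.Ico t b := fun i => us _
    have hsum : ∑ i ∈ Finset.range n, edist (γ (u (i+1))) (γ (u i))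
        = ∑ i ∈ Finset.range n, edist (γ (v (i+1))) (γ (v i)) := by
      refine Finset.sum_congr rfl fun i hi => ?_
      have hi' := Finset.mem_range.1 hi
      have e1 : v (i+1) = u (i+1) := by simp [hv, min_eq_left (Nat.succ_le_of_lt hi')]
      have e2 : v i = u i := by simp [hv, min_eq_left hi'.le]
      rw [e1, e2]
    rw [hsum]
    by_cases hcase : v n = t
    · have hzero : ∀ i ∈ Finset.range n, edist (γ (v (i+1))) (γ (v i)) = 0 := by
        intro i hi
        have hi' := Finset.mem_range.1 hi
        have h1 : v i = t := le_antisymm (le_trans (hvmono hi'.le) hcase.le) (hvmem i).1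
        have h2 : v (i+1) = t := le_antisymm (le_trans (hvmono hi') hcase.le) (hvmem _).1
        rw [h1, h2, edist_self]
      rw [Finset.sum_eq_zero hzero]; exact zero_le
    · by_cases hc0 : v 0 = t
      · set j := Nat.findGreatest (fun i => v i = t) n with hj
        have hjle : j ≤ n := Nat.findGreatest_le n
        have hjt : v j = t := by
          have := Nat.findGreatest_spec (P := fun i => v i = t) (Nat.zero_le n) hc0
          simpa using this
        have hjlt : j < n := lt_of_le_of_ne hjle fun h => hcase (h ▸ hjt)
        have hgt : ∀ i, j < i → t < v i := by
          intro i hi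
          rcases le_or_gt i n with h | h
          · refine lt_of_le_of_ne (hvmem i).1 fun hvit => ?_
            exact Nat.findGreatest_is_greatest (P := fun i => v i = t) hi h hvit.symm
          · have hvi : v i = v n := by
              simp only [hv]
              rw [min_eq_right h.le, min_self]
            rw [hvi]
            exact lt_of_le_of_ne (hvmem n).1 (Ne.symm hcase)
        set c := v (j+1) with hcdef
        have hcmem : c ∈ Set.Ioo t b := ⟨hgt _ (Nat.lt_succ_self j), (hvmem (j+1)).2⟩
        have hj1n : j + 1 ≤ n := Nat.succ_le_of_lt hjlt
        have hsplit : ∑ i ∈ Finset.range n, edist (γ (v (i+1))) (γ (v i))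
            = ∑ i ∈ Finset.range (j+1), edist (γ (v (i+1))) (γ (v i))
              + ∑ i ∈ Finset.Ico (j+1) n, edist (γ (v (i+1))) (γ (v i)) := by
          rw [Finset.range_eq_Ico, ← Finset.sum_Ico_consecutive _ (Nat.zero_le (j+1)) hj1n,
            ← Finset.range_eq_Ico]
        have hfirst : ∑ i ∈ Finset.range (j+1), edist (γ (v (i+1))) (γ (v i))
            = edist (γ c) (γ t) := by
          rw [Finset.sum_range_succ]
          have hz : ∑ i ∈ Finset.range j, edist (γ (v (i+1))) (γ (v i)) = 0 := by
            refine Finset.sum_eq_zero fun i hi => ?_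
            have hi' := Finset.mem_range.1 hi
            have h1 : v i = t := le_antisymm (le_trans (hvmono hi'.le) hjt.le) (hvmem i).1
            have h2 : v (i+1) = t := le_antisymm (le_trans (hvmono hi') hjt.le) (hvmem _).1
            rw [h1, h2, edist_self]
          rw [hz, zero_add, hjt]
        have hsecond : ∑ i ∈ Finset.Ico (j+1) n, edist (γ (v (i+1))) (γ (v i))
            ≤ eVariationOn γ (Set.Ico c b) := by
          rw [Finset.sum_Ico_eq_sum_range]
          set w : ℕ → ℝ := fun k => v (j+1+k) with hw
          have hwmono : Monotone w := fun i i' h => hvmono (by omega)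
          have hwmem : ∀ k, w k ∈ Set.Ico c b :=
            fun k => ⟨hvmono (Nat.le_add_right _ _), (hvmem _).2⟩
          have hco : ∀ i ∈ Finset.range (n - (j+1)),
              edist (γ (v (j+1+i+1))) (γ (v (j+1+i))) = edist (γ (w (i+1))) (γ (w i)) := by
            intro i _
            simp only [hw]
            have e : j + 1 + (i + 1) = j + 1 + i + 1 := by omega
            rw [e]
          rw [Finset.sum_congr rfl hco]
          exact eVariationOn.sum_le (f := γ) hwmono hwmem
        rw [hsplit, hfirst]
        have h1 : edist (γ c) (γ t) ≤ ENNReal.ofReal L + eVariationOn γ (Set.Ioc t c) := by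
          rw [edist_comm]; exact hjump c hcmem
        calc edist (γ c) (γ t) + ∑ i ∈ Finset.Ico (j+1) n, edist (γ (v (i+1))) (γ (v i))
            ≤ (ENNReal.ofReal L + eVariationOn γ (Set.Ioc t c)) + eVariationOn γ (Set.Ico c b) :=
              add_le_add h1 hsecond
          _ = ENNReal.ofReal L + (eVariationOn γ (Set.Ioc t c) + eVariationOn γ (Set.Ico c b)) :=
              add_assoc _ _ _
          _ = ENNReal.ofReal L + eVariationOn γ (Set.Ioo t b) := by
              rw [← eVariationOn.union γ (isGreatest_Ioc hcmem.1) (isLeast_Ico hcmem.2),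
                Set.Ioc_union_Ico_eq_Ioo hcmem.1 hcmem.2]
          _ = eVariationOn γ (Set.Ioo t b) + ENNReal.ofReal L := add_comm _ _
      · have hv0 : t < v 0 := lt_of_le_of_ne (hvmem 0).1 (Ne.symm hc0)
        have hmem : ∀ i, v i ∈ Set.Ioo t b :=
          fun i => ⟨hv0.trans_le (hvmono (Nat.zero_le i)), (hvmem i).2⟩
        exact le_trans (eVariationOn.sum_le (f := γ) (n := n) hvmono hmem) le_self_add
  -- main inequality ≥
  have key_ge : eVariationOn γ (Set.Ioo t b) + ENNReal.ofReal L
      ≤ eVariationOn γ (Set.Ico t b) := by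
    rw [evar_Ioo_eq_iSup' γ t b, ENNReal.biSup_add (nonempty_Ioo.2 htb)]
    apply iSup₂_le
    intro b' hb'
    rw [evar_Ioc_eq_iSup' γ t b', ENNReal.biSup_add (nonempty_Ioc.2 hb'.1)]
    apply iSup₂_le
    intro s hs
    have hev : ∀ᶠ s' in l, eVariationOn γ (Set.Icc s b') + edist (γ t) (γ s')
        ≤ eVariationOn γ (Set.Ico t b) := by
      have h1 : ∀ᶠ s' in l, s' ∈ Set.Ioc t s := by
        filter_upwards [self_mem_nhdsWithin,
          mem_nhdsWithin_of_mem_nhds (Iio_mem_nhds hs.1)] with s' hs' hs''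
        exact ⟨hs'.2, hs''.le⟩
      filter_upwards [h1] with s' hs'
      have hsb' : s ≤ b' := hs.2
      have hs'b' : s' ≤ b' := hs'.2.trans hsb'
      have hsplit : eVariationOn γ (Set.Icc t b')
          = eVariationOn γ (Set.Icc t s') + eVariationOn γ (Set.Icc s' b') := by
        rw [← eVariationOn.union γ (isGreatest_Icc hs'.1.le) (isLeast_Icc hs'b'),
          Set.Icc_union_Icc_eq_Icc hs'.1.le hs'b']
      have h2 : edist (γ t) (γ s') ≤ eVariationOn γ (Set.Icc t s') :=
        eVariationOn.edist_le γ ⟨le_rfl, hs'.1.le⟩ ⟨hs'.1.le, le_rfl⟩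
      have h3 : eVariationOn γ (Set.Icc s b') ≤ eVariationOn γ (Set.Icc s' b') :=
        eVariationOn.mono γ (Set.Icc_subset_Icc_left hs'.2)
      have h4 : eVariationOn γ (Set.Icc t b') ≤ eVariationOn γ (Set.Ico t b) :=
        eVariationOn.mono γ fun x hx => ⟨hx.1, lt_of_le_of_lt hx.2 hb'.2⟩
      calc eVariationOn γ (Set.Icc s b') + edist (γ t) (γ s')
          ≤ eVariationOn γ (Set.Icc s' b') + eVariationOn γ (Set.Icc t s') :=
            add_le_add h3 h2
        _ = eVariationOn γ (Set.Icc t b') := by rw [add_comm]; exact hsplit.symm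
        _ ≤ eVariationOn γ (Set.Ico t b) := h4
    exact le_of_tendsto (tendsto_const_nhds.add hEt) hev
  have heq : eVariationOn γ (Set.Ico t b)
      = eVariationOn γ (Set.Ioo t b) + ENNReal.ofReal L := le_antisymm key_le key_ge
  have hsing : eVariationOn γ ({t} : Set ℝ) = 0 :=
    eVariationOn.subsingleton γ subsingleton_singleton
  refine ⟨L, hLt, heq, ?_⟩
  rw [heq, hsing, add_zero]
  exact ENNReal.lt_add_right
    (hfin' fun x hx => ⟨hx.1.le, hx.2.le⟩).ne
    (ENNReal.ofReal_pos.2 hLpos).ne'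
end

section
/- Let γ : I → X be locally of bounded variation with speed measure ν. Then for every t ∈ I, ν({t}) = d(γ(t−),γ(t)) + d(γ(t),γ(t+)), where d(γ(t−),γ(t)) := lim_{s↗t} d(γ(s),γ(t)) (interpreted as 0 if t = inf I ∈ I) and d(γ(t),γ(t+)) := lim_{s↘t} d(γ(t),γ(s)) (interpreted as 0 if t = sup I ∈ I); these limits exist. -/
open Filter Topology Set MeasureTheory

open scoped ENNReal NNReal

lemma evar_Icc_add {X : Type*} [MetricSpace X] (γ : ℝ → X) {s s' t : ℝ}
    (h1 : s ≤ s') (h2 : s' ≤ t) :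
    eVariationOn γ (Icc s s') + eVariationOn γ (Icc s' t) = eVariationOn γ (Icc s t) := by
  have := eVariationOn.Icc_add_Icc γ (s := (univ : Set ℝ)) h1 h2 (mem_univ s')
  simpa using this

lemma aux_left {X : Type*} [MetricSpace X] (γ : ℝ → X) {a t : ℝ} (hat : a < t)
    (hfin : eVariationOn γ (Icc a t) ≠ ⊤) :
    ∃ L : ℝ, 0 ≤ L ∧ Tendsto (fun s => dist (γ s) (γ t)) (𝓝[<] t) (𝓝 L) ∧
      (⨅ s ∈ Ioo a t, eVariationOn γ (Icc s t)) = ENNReal.ofReal L := by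
  set W : ℝ → ℝ≥0∞ := fun s => eVariationOn γ (Icc s t) with hW
  have Wfin : ∀ s, a ≤ s → W s ≠ ⊤ := fun s hs =>
    ne_top_of_le_ne_top hfin (eVariationOn.mono γ (Icc_subset_Icc_left hs))
  set M : ℝ≥0∞ := ⨅ s ∈ Ioo a t, W s with hM
  have Mle : ∀ s ∈ Ioo a t, M ≤ W s := fun s hs => iInf₂_le s hs
  have Mfin : M ≠ ⊤ := by
    have h1 : M ≤ W ((a+t)/2) := Mle _ ⟨by linarith, by linarith⟩
    exact ne_top_of_le_ne_top (Wfin _ (by linarith)) h1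
  -- Step A: uniform smallness of variation near t from the left
  have stepA : ∀ ε : ℝ, 0 < ε → ∃ s₀ ∈ Ioo a t, ∀ s s', s₀ ≤ s → s ≤ s' → s' < t →
      dist (γ s) (γ s') < ε := by
    intro ε hε
    obtain ⟨s₀, hs₀, hWs₀⟩ : ∃ s₀ ∈ Ioo a t, W s₀ < M + ENNReal.ofReal ε := by
      by_contra hcon; push_neg at hcon
      have h1 : M + ENNReal.ofReal ε ≤ M := hM ▸ le_iInf₂ hcon
      exact absurd h1 (not_le.mpr (ENNReal.lt_add_right Mfin (ENNReal.ofReal_pos.mpr hε).ne'))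
    refine ⟨s₀, hs₀, fun s s' hs hss' hs't => ?_⟩
    have hW1 : eVariationOn γ (Icc s₀ s') + W s' = W s₀ :=
      evar_Icc_add γ (hs.trans hss') hs't.le
    have hMW : M ≤ W s' := Mle s' ⟨lt_of_lt_of_le hs₀.1 (hs.trans hss'), hs't⟩
    have h2 : eVariationOn γ (Icc s₀ s') + W s' < ENNReal.ofReal ε + W s' := by
      rw [hW1]
      calc W s₀ < M + ENNReal.ofReal ε := hWs₀
        _ ≤ W s' + ENNReal.ofReal ε := by exact add_le_add hMW le_rfl
        _ = ENNReal.ofReal ε + W s' := add_comm _ _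
    have h3 : eVariationOn γ (Icc s₀ s') < ENNReal.ofReal ε :=
      (ENNReal.add_lt_add_iff_right (Wfin s' (hs₀.1.le.trans (hs.trans hss')))).mp h2
    have h4 : edist (γ s) (γ s') ≤ eVariationOn γ (Icc s₀ s') :=
      eVariationOn.edist_le γ ⟨hs, hss'⟩ ⟨hs.trans hss', le_rfl⟩
    have := lt_of_le_of_lt h4 h3
    rwa [edist_dist, ENNReal.ofReal_lt_ofReal_iff hε] at this
  -- Step B: existence of the limit L
  set g : ℝ → ℝ := fun s => dist (γ s) (γ t) with hg
  have hnb : (𝓝[<] t).NeBot := nhdsWithin_Iio_self_neBot' ⟨a, hat⟩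
  have hcauchy : Cauchy (map g (𝓝[<] t)) := by
    rw [Metric.cauchy_iff]
    refine ⟨map_neBot, fun ε hε => ?_⟩
    obtain ⟨s₀, hs₀, hsmall⟩ := stepA (ε/2) (by linarith)
    refine ⟨g '' Ioo s₀ t, image_mem_map (Ioo_mem_nhdsLT_of_mem ⟨hs₀.2, le_rfl⟩), ?_⟩
    rintro x ⟨u, hu, rfl⟩ y ⟨v, hv, rfl⟩
    have hb : dist (g u) (g v) ≤ dist (γ u) (γ v) := by
      rw [Real.dist_eq]; exact abs_dist_sub_le _ _ _
    rcases le_total u v with h | h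
    · have := hsmall u v hu.1.le h hv.2
      calc dist (g u) (g v) ≤ dist (γ u) (γ v) := hb
        _ < ε/2 := this
        _ < ε := by linarith
    · have := hsmall v u hv.1.le h hu.2
      calc dist (g u) (g v) ≤ dist (γ u) (γ v) := hb
        _ = dist (γ v) (γ u) := dist_comm _ _
        _ < ε/2 := this
        _ < ε := by linarith
  obtain ⟨L, hLmap⟩ := CompleteSpace.complete hcauchy
  have hLt : Tendsto g (𝓝[<] t) (𝓝 L) := hLmap
  have hL0 : 0 ≤ L := ge_of_tendsto hLt (Eventually.of_forall fun s => dist_nonneg)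
  refine ⟨L, hL0, hLt, ?_⟩
  -- Step C1 : ofReal L ≤ M
  have hC1 : ENNReal.ofReal L ≤ M := by
    refine le_iInf₂ fun s hs => ?_
    have h1 : Tendsto (fun u => ENNReal.ofReal (g u)) (𝓝[<] t) (𝓝 (ENNReal.ofReal L)) :=
      (ENNReal.continuous_ofReal.tendsto L).comp hLt
    refine le_of_tendsto h1 ?_
    filter_upwards [Ioo_mem_nhdsLT_of_mem ⟨hs.2, le_rfl⟩] with u hu
    rw [hg, ← edist_dist]
    exact eVariationOn.edist_le γ ⟨hu.1.le, hu.2.le⟩ ⟨hs.2.le, le_rfl⟩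
  -- Step C2 : M ≤ ofReal L
  have hC2 : M ≤ ENNReal.ofReal L := by
    refine ENNReal.le_of_forall_pos_le_add fun ε hε _ => ?_
    have hε' : (0:ℝ) < ε := hε
    have hev : g ⁻¹' (Iio (L + ε)) ∈ 𝓝[<] t :=
      hLt (Iio_mem_nhds (by linarith : L < L + (ε:ℝ)))
    obtain ⟨l', hl', hsubev⟩ := mem_nhdsLT_iff_exists_Ioo_subset.mp hev
    set s₁ : ℝ := max a l' with hs₁def
    have hs₁t : s₁ < t := max_lt hat hl'
    set s₂ : ℝ := (s₁ + t)/2 with hs₂def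
    have hs₁s₂ : s₁ < s₂ := by rw [hs₂def]; linarith
    have hs₂t : s₂ < t := by rw [hs₂def]; linarith
    have has₂ : a < s₂ := lt_of_le_of_lt (le_max_left a l') hs₁s₂
    have hgsmall : ∀ u, s₂ ≤ u → u < t → g u < L + ε := by
      intro u h1 h2
      exact hsubev ⟨lt_of_le_of_lt (le_max_right a l') (lt_of_lt_of_le hs₁s₂ h1), h2⟩
    set D : ℝ≥0∞ := ENNReal.ofReal (L + ε) with hD
    have key : W s₂ ≤ (W s₂ - M) + D := by
      rw [hW]
      refine iSup_le ?_
      rintro ⟨n, u, hu, us⟩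
      dsimp only
      -- helper : partial sums up to an index with u value < t
      have hpart : ∀ m : ℕ, u m < t →
          (∑ i ∈ Finset.range m, edist (γ (u (i+1))) (γ (u i))) ≤ W s₂ - M := by
        intro m hm
        have hsum : (∑ i ∈ Finset.range m, edist (γ (u (i+1))) (γ (u i)))
            ≤ eVariationOn γ (Icc s₂ (u m)) := by
          rw [Finset.range_eq_Ico]
          exact eVariationOn.sum_le_of_monotoneOn_Icc (f := γ) (hu.monotoneOn _)
            (fun i hi => ⟨(us i).1, hu hi.2⟩)
        refine hsum.trans ?_
        have hMum : M ≤ W (u m) := Mle (u m) ⟨lt_of_lt_of_le has₂ (us m).1, hm⟩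
        have hadd : eVariationOn γ (Icc s₂ (u m)) + W (u m) = W s₂ :=
          evar_Icc_add γ (us m).1 hm.le
        refine ENNReal.le_sub_of_add_le_right Mfin ?_
        calc eVariationOn γ (Icc s₂ (u m)) + M
            ≤ eVariationOn γ (Icc s₂ (u m)) + W (u m) := add_le_add le_rfl hMum
          _ = W s₂ := hadd
      by_cases hn : u n < t
      · exact (hpart n hn).trans le_self_add
      · have hunt : u n = t := le_antisymm (us n).2 (not_lt.mp hn)
        have hex : ∃ i, u i = t := ⟨n, hunt⟩
        obtain ⟨k, hkdef⟩ : ∃ k, Nat.find hex = k := ⟨_, rfl⟩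
        have hk : u k = t := hkdef ▸ Nat.find_spec hex
        have hkn : k ≤ n := hkdef ▸ Nat.find_min' hex hunt
        have hlt : ∀ i, i < k → u i < t := fun i hi =>
          lt_of_le_of_ne (us i).2 (Nat.find_min hex (hkdef ▸ hi))
        have hge : ∀ i, k ≤ i → u i = t := fun i hi =>
          le_antisymm (us i).2 (hk ▸ hu hi)
        have hsplit : (∑ i ∈ Finset.range n, edist (γ (u (i+1))) (γ (u i)))
            = ∑ i ∈ Finset.range k, edist (γ (u (i+1))) (γ (u i)) := by
          have h0 : ∑ i ∈ Finset.Ico k n, edist (γ (u (i+1))) (γ (u i)) = 0 := by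
            refine Finset.sum_eq_zero fun i hi => ?_
            rw [hge i (Finset.mem_Ico.mp hi).1, hge (i+1) ((Finset.mem_Ico.mp hi).1.trans i.le_succ)]
            simp
          calc ∑ i ∈ Finset.range n, edist (γ (u (i+1))) (γ (u i))
              = ∑ i ∈ Finset.Ico 0 n, edist (γ (u (i+1))) (γ (u i)) := by
                rw [Finset.range_eq_Ico]
            _ = (∑ i ∈ Finset.Ico 0 k, edist (γ (u (i+1))) (γ (u i)))
                + ∑ i ∈ Finset.Ico k n, edist (γ (u (i+1))) (γ (u i)) :=
                (Finset.sum_Ico_consecutive _ (Nat.zero_le k) hkn).symm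
            _ = ∑ i ∈ Finset.range k, edist (γ (u (i+1))) (γ (u i)) := by
                rw [h0, add_zero, Finset.range_eq_Ico]
        rw [hsplit]
        rcases Nat.eq_zero_or_pos k with hk0 | hkpos
        · rw [hk0]; simp
        · obtain ⟨m, rfl⟩ : ∃ m, k = m + 1 := ⟨k - 1, by omega⟩
          rw [Finset.sum_range_succ]
          have humt : u m < t := hlt m (Nat.lt_succ_self m)
          have hterm : edist (γ (u (m+1))) (γ (u m)) ≤ D := by
            rw [show u (m+1) = t from hk, edist_comm, edist_dist]
            exact ENNReal.ofReal_le_ofReal (hgsmall (u m) (us m).1 humt).le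
          exact add_le_add (hpart m humt) hterm
    have hWs₂fin : W s₂ ≠ ⊤ := Wfin s₂ has₂.le
    have hMW : M ≤ W s₂ := Mle s₂ ⟨has₂, hs₂t⟩
    have h5 : W s₂ - (W s₂ - M) ≤ D := tsub_le_iff_left.mpr key
    rw [ENNReal.sub_sub_cancel hWs₂fin hMW] at h5
    calc M ≤ D := h5
      _ = ENNReal.ofReal L + ENNReal.ofReal (ε:ℝ) := ENNReal.ofReal_add hL0 hε'.le
      _ = ENNReal.ofReal L + ε := by rw [ENNReal.ofReal_coe_nnreal]
  exact le_antisymm hC2 hC1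

lemma aux_right {X : Type*} [MetricSpace X] (γ : ℝ → X) {t b : ℝ} (htb : t < b)
    (hfin : eVariationOn γ (Icc t b) ≠ ⊤) :
    ∃ R : ℝ, 0 ≤ R ∧ Tendsto (fun s => dist (γ t) (γ s)) (𝓝[>] t) (𝓝 R) ∧
      (⨅ s ∈ Ioo t b, eVariationOn γ (Icc t s)) = ENNReal.ofReal R := by
  set γ' : ℝ → X := fun s => γ (-s) with hγ'
  have himg : ∀ u v : ℝ, eVariationOn γ' (Icc u v) = eVariationOn γ (Icc (-v) (-u)) := by
    intro u v
    have hanti : AntitoneOn (fun s : ℝ => -s) (Icc u v) :=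
      fun x _ y _ hxy => neg_le_neg hxy
    have h1 := eVariationOn.comp_eq_of_antitoneOn γ (fun s : ℝ => -s) hanti
    have h2 : (fun s : ℝ => -s) '' Icc u v = Icc (-v) (-u) := by
      ext x
      simp only [mem_image, mem_Icc]
      constructor
      · rintro ⟨y, ⟨hy1, hy2⟩, rfl⟩; constructor <;> linarith
      · rintro ⟨h1', h2'⟩; exact ⟨-x, ⟨by linarith, by linarith⟩, by ring⟩
    rw [← h2, ← h1]; rfl
  have hfin' : eVariationOn γ' (Icc (-b) (-t)) ≠ ⊤ := by
    rw [himg]; simpa using hfin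
  obtain ⟨R, hR0, hRt, hRinf⟩ := aux_left γ' (by linarith : -b < -t) hfin'
  have hneg : Tendsto (fun s : ℝ => -s) (𝓝[>] t) (𝓝[<] (-t)) := by
    apply tendsto_nhdsWithin_of_tendsto_nhds_of_eventually_within
    · exact (continuous_neg.tendsto t).mono_left nhdsWithin_le_nhds
    · filter_upwards [self_mem_nhdsWithin] with x hx
      exact neg_lt_neg (mem_Ioi.mp hx)
  refine ⟨R, hR0, ?_, ?_⟩
  · have h3 := hRt.comp hneg
    have h4 : (fun s : ℝ => dist (γ' s) (γ' (-t))) ∘ (fun s : ℝ => -s)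
        = fun s : ℝ => dist (γ t) (γ s) := by
      funext s
      simp only [Function.comp_apply, hγ', neg_neg, dist_comm]
    rwa [h4] at h3
  · rw [← hRinf]
    apply le_antisymm
    · refine le_iInf₂ fun s hs => ?_
      have he : eVariationOn γ' (Icc s (-t)) = eVariationOn γ (Icc t (-s)) := by
        rw [himg, neg_neg]
      rw [he]
      exact iInf₂_le (-s) ⟨by linarith [hs.2], by linarith [hs.1]⟩
    · refine le_iInf₂ fun s hs => ?_
      have he : eVariationOn γ' (Icc (-s) (-t)) = eVariationOn γ (Icc t s) := by
        rw [himg, neg_neg, neg_neg]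
      rw [← he]
      exact iInf₂_le (-s) ⟨by linarith [hs.2], by linarith [hs.1]⟩

/-- `ν` is the speed measure of `γ` on the interval `I`: a Borel measure on `I`
(vanishing outside `I`) whose value on every subinterval of `I` that is relatively open
in `I` equals the variation of `γ` there. -/
def IsSpeedMeasure {X : Type*} [MetricSpace X] (γ : ℝ → X) (I : Set ℝ)
    (ν : Measure ℝ) : Prop :=
  ν Iᶜ = 0 ∧
  ∀ J : Set ℝ, J ⊆ I → J.OrdConnected → (∃ U : Set ℝ, IsOpen U ∧ J = U ∩ I) →
    ν J = eVariationOn γ J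

/-- The speed measure of a point: `ν({t}) = d(γ(t-),γ(t)) + d(γ(t),γ(t+))`,
where the one-sided limits exist (and are interpreted as `0` at the corresponding
endpoint of `I`). -/
theorem speed_measure_singleton {X : Type*} [MetricSpace X]
    (I : Set ℝ) (hI : I.OrdConnected) (γ : ℝ → X)
    (hγ : ∀ a ∈ I, ∀ b ∈ I, a ≤ b → eVariationOn γ (Set.Icc a b) < ⊤)
    (ν : Measure ℝ) (hν : IsSpeedMeasure γ I ν)
    (t : ℝ) (ht : t ∈ I) :
    ∃ L R : ℝ,
      Tendsto (fun s => dist (γ s) (γ t)) (𝓝[I ∩ Set.Iio t] t) (𝓝 L) ∧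
      (I ∩ Set.Iio t = ∅ → L = 0) ∧
      Tendsto (fun s => dist (γ t) (γ s)) (𝓝[I ∩ Set.Ioi t] t) (𝓝 R) ∧
      (I ∩ Set.Ioi t = ∅ → R = 0) ∧
      ν {t} = ENNReal.ofReal (L + R) := by
  have hIm : MeasurableSet I := hI.measurableSet
  -- left package
  have HL : ∃ (a L : ℝ), a ∈ I ∧ a ≤ t ∧ 0 ≤ L ∧
      Tendsto (fun s => dist (γ s) (γ t)) (𝓝[I ∩ Set.Iio t] t) (𝓝 L) ∧
      (I ∩ Set.Iio t = ∅ → L = 0) ∧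
      ((I ∩ Set.Iio t).Nonempty → a < t ∧
        (⨅ s ∈ Ioo a t, eVariationOn γ (Icc s t)) = ENNReal.ofReal L ∧ Icc a t ⊆ I) := by
    rcases eq_empty_or_nonempty (I ∩ Set.Iio t) with he | hne
    · refine ⟨t, 0, ht, le_rfl, le_rfl, ?_, fun _ => rfl, fun hne => absurd he hne.ne_empty⟩
      rw [he, nhdsWithin_empty]
      exact tendsto_bot
    · obtain ⟨a, haI, hat⟩ := hne
      have hsub : Icc a t ⊆ I := hI.out haI ht
      have hfin : eVariationOn γ (Icc a t) ≠ ⊤ := (hγ a haI t ht hat.le).ne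
      obtain ⟨L, hL0, hLt, hLinf⟩ := aux_left γ hat hfin
      refine ⟨a, L, haI, hat.le, hL0,
        hLt.mono_left (nhdsWithin_mono t inter_subset_right),
        fun he => absurd he (nonempty_iff_ne_empty.mp ⟨a, haI, hat⟩),
        fun _ => ⟨hat, hLinf, hsub⟩⟩
  -- right package
  have HR : ∃ (b R : ℝ), b ∈ I ∧ t ≤ b ∧ 0 ≤ R ∧
      Tendsto (fun s => dist (γ t) (γ s)) (𝓝[I ∩ Set.Ioi t] t) (𝓝 R) ∧
      (I ∩ Set.Ioi t = ∅ → R = 0) ∧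
      ((I ∩ Set.Ioi t).Nonempty → t < b ∧
        (⨅ s ∈ Ioo t b, eVariationOn γ (Icc t s)) = ENNReal.ofReal R ∧ Icc t b ⊆ I) := by
    rcases eq_empty_or_nonempty (I ∩ Set.Ioi t) with he | hne
    · refine ⟨t, 0, ht, le_rfl, le_rfl, ?_, fun _ => rfl, fun hne => absurd he hne.ne_empty⟩
      rw [he, nhdsWithin_empty]
      exact tendsto_bot
    · obtain ⟨b, hbI, htb⟩ := hne
      have hsub : Icc t b ⊆ I := hI.out ht hbI
      have hfin : eVariationOn γ (Icc t b) ≠ ⊤ := (hγ t ht b hbI htb.le).ne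
      obtain ⟨R, hR0, hRt, hRinf⟩ := aux_right γ htb hfin
      refine ⟨b, R, hbI, htb.le, hR0,
        hRt.mono_left (nhdsWithin_mono t inter_subset_right),
        fun he => absurd he (nonempty_iff_ne_empty.mp ⟨b, hbI, htb⟩),
        fun _ => ⟨htb, hRinf, hsub⟩⟩
  obtain ⟨a, L, haI, hat, hL0, hLtend, hLemp, hLne⟩ := HL
  obtain ⟨b, R, hbI, htb, hR0, hRtend, hRemp, hRne⟩ := HR
  refine ⟨L, R, hLtend, hLemp, hRtend, hRemp, ?_⟩
  -- the shrinking relatively open neighborhoods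
  set ε : ℕ → ℝ := fun n => 1 / (n + 1) with hε
  have hεpos : ∀ n, 0 < ε n := fun n => by positivity
  have hεdef : ∀ n, ε n = 1 / (n + 1) := fun n => rfl
  set J : ℕ → Set ℝ := fun n => Ioo (t - ε n) (t + ε n) ∩ I with hJ
  have htJ : ∀ n, t ∈ J n := fun n =>
    ⟨⟨by linarith [hεpos n], by linarith [hεpos n]⟩, ht⟩
  have hJanti : Antitone J := by
    intro m n hmn
    have hle : ε n ≤ ε m := by
      rw [hεdef, hεdef]
      apply one_div_le_one_div_of_le (by positivity)
      exact_mod_cast Nat.succ_le_succ hmn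
    exact inter_subset_inter (Ioo_subset_Ioo (by linarith) (by linarith)) Subset.rfl
  have hJmeas : ∀ n, MeasurableSet (J n) := fun n => measurableSet_Ioo.inter hIm
  have hJcap : ⋂ n, J n = {t} := by
    apply Subset.antisymm
    · intro x hx
      simp only [mem_iInter] at hx
      have hxa : ∀ n : ℕ, |x - t| < ε n := fun n =>
        abs_sub_lt_iff.mpr ⟨by linarith [(hx n).1.2], by linarith [(hx n).1.1]⟩
      have hxt : x = t := by
        by_contra hne
        obtain ⟨n, hn⟩ := exists_nat_one_div_lt (abs_pos.mpr (sub_ne_zero.mpr hne))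
        exact absurd (hxa n) (not_lt.mpr ((hεdef n) ▸ hn.le))
      simp [hxt]
    · intro x hx
      simp only [mem_singleton_iff] at hx
      subst hx
      exact mem_iInter.mpr htJ
  have hνJ : ∀ n, ν (J n) = eVariationOn γ (J n) := fun n =>
    hν.2 (J n) inter_subset_right (ordConnected_Ioo.inter hI) ⟨Ioo _ _, isOpen_Ioo, rfl⟩
  -- finiteness
  have claimA : ∃ N : ℕ, ∀ x ∈ J N, a ≤ x := by
    rcases eq_empty_or_nonempty (I ∩ Set.Iio t) with he | hne
    · refine ⟨0, fun x hx => ?_⟩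
      by_contra hax
      push_neg at hax
      have : x ∈ I ∩ Set.Iio t := ⟨hx.2, lt_of_lt_of_le hax hat⟩
      rw [he] at this
      exact this
    · obtain ⟨hat', -, -⟩ := hLne hne
      obtain ⟨N, hN⟩ := exists_nat_one_div_lt (sub_pos.mpr hat')
      refine ⟨N, fun x hx => ?_⟩
      rcases le_or_gt t x with h | h
      · linarith
      · have h1 : t - ε N < x := hx.1.1
        have h2 : ε N < t - a := (hεdef N) ▸ hN
        linarith
  have claimB : ∃ N : ℕ, ∀ x ∈ J N, x ≤ b := by
    rcases eq_empty_or_nonempty (I ∩ Set.Ioi t) with he | hne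
    · refine ⟨0, fun x hx => ?_⟩
      by_contra hbx
      push_neg at hbx
      have : x ∈ I ∩ Set.Ioi t := ⟨hx.2, lt_of_le_of_lt htb hbx⟩
      rw [he] at this
      exact this
    · obtain ⟨htb', -, -⟩ := hRne hne
      obtain ⟨N, hN⟩ := exists_nat_one_div_lt (sub_pos.mpr htb')
      refine ⟨N, fun x hx => ?_⟩
      rcases le_or_gt x t with h | h
      · linarith
      · have h1 : x < t + ε N := hx.1.2
        have h2 : ε N < b - t := (hεdef N) ▸ hN
        linarith
  obtain ⟨Na, hNa⟩ := claimA
  obtain ⟨Nb, hNb⟩ := claimB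
  have hfinN : ν (J (max Na Nb)) ≠ ⊤ := by
    rw [hνJ]
    refine ne_top_of_le_ne_top (hγ a haI b hbI (hat.trans htb)).ne ?_
    refine eVariationOn.mono γ fun x hx => ?_
    exact ⟨hNa x (hJanti (le_max_left _ _) hx), hNb x (hJanti (le_max_right _ _) hx)⟩
  -- measure of the singleton as an infimum
  have htend : Tendsto (fun n => ν (J n)) atTop (𝓝 (ν {t})) := by
    have h1 := tendsto_measure_iInter_atTop (μ := ν)
      (fun n => (hJmeas n).nullMeasurableSet) hJanti ⟨max Na Nb, hfinN⟩
    rwa [hJcap] at h1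
  have hinf : ν {t} = ⨅ n, ν (J n) := by
    refine tendsto_nhds_unique htend (tendsto_atTop_iInf fun m n hmn => ?_)
    exact measure_mono (hJanti hmn)
  -- lower bound
  have hgeL : ∀ n, ∃ A : Set ℝ, IsGreatest A t ∧ A ⊆ J n ∧ ENNReal.ofReal L ≤ eVariationOn γ A := by
    intro n
    rcases eq_empty_or_nonempty (I ∩ Set.Iio t) with he | hne
    · refine ⟨{t}, isGreatest_singleton, singleton_subset_iff.mpr (htJ n), ?_⟩
      rw [hLemp he]
      simp
    · obtain ⟨hat', hLinf, hsub⟩ := hLne hne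
      set s₁ := max ((a + t)/2) (t - ε n / 2) with hs₁
      have h1 : a < s₁ := lt_of_lt_of_le (by linarith) (le_max_left _ _)
      have h2 : s₁ < t := max_lt (by linarith) (by linarith [hεpos n])
      refine ⟨Icc s₁ t, ⟨⟨h2.le, le_rfl⟩, fun y hy => hy.2⟩, ?_, ?_⟩
      · intro x hx
        have hx1 : s₁ ≤ x := hx.1
        have hx2 : x ≤ t := hx.2
        have h3 : t - ε n / 2 ≤ s₁ := le_max_right _ _
        refine ⟨⟨by linarith [hεpos n], by linarith [hεpos n]⟩, hsub ⟨h1.le.trans hx1, hx2⟩⟩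
      · rw [← hLinf]
        exact iInf₂_le s₁ ⟨h1, h2⟩
  have hgeR : ∀ n, ∃ B : Set ℝ, IsLeast B t ∧ B ⊆ J n ∧ ENNReal.ofReal R ≤ eVariationOn γ B := by
    intro n
    rcases eq_empty_or_nonempty (I ∩ Set.Ioi t) with he | hne
    · refine ⟨{t}, isLeast_singleton, singleton_subset_iff.mpr (htJ n), ?_⟩
      rw [hRemp he]
      simp
    · obtain ⟨htb', hRinf, hsub⟩ := hRne hne
      set s₁ := min ((t + b)/2) (t + ε n / 2) with hs₁
      have h1 : s₁ < b := lt_of_le_of_lt (min_le_left _ _) (by linarith)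
      have h2 : t < s₁ := lt_min (by linarith) (by linarith [hεpos n])
      refine ⟨Icc t s₁, ⟨⟨le_rfl, h2.le⟩, fun y hy => hy.1⟩, ?_, ?_⟩
      · intro x hx
        have hx1 : t ≤ x := hx.1
        have hx2 : x ≤ s₁ := hx.2
        have h3 : s₁ ≤ t + ε n / 2 := min_le_right _ _
        refine ⟨⟨by linarith [hεpos n], by linarith [hεpos n]⟩, hsub ⟨hx1, hx2.trans h1.le⟩⟩
      · rw [← hRinf]
        exact iInf₂_le s₁ ⟨h2, h1⟩
  have hge : ENNReal.ofReal L + ENNReal.ofReal R ≤ ⨅ n, ν (J n) := by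
    refine le_iInf fun n => ?_
    obtain ⟨A, hA, hAJ, hAL⟩ := hgeL n
    obtain ⟨B, hB, hBJ, hBR⟩ := hgeR n
    calc ENNReal.ofReal L + ENNReal.ofReal R ≤ eVariationOn γ A + eVariationOn γ B := add_le_add hAL hBR
      _ = eVariationOn γ (A ∪ B) := (eVariationOn.union γ hA hB).symm
      _ ≤ eVariationOn γ (J n) := eVariationOn.mono γ (union_subset hAJ hBJ)
      _ = ν (J n) := (hνJ n).symm
  -- upper bound
  have hle : (⨅ n, ν (J n)) ≤ ENNReal.ofReal L + ENNReal.ofReal R := by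
    refine ENNReal.le_of_forall_pos_le_add fun δ hδ _ => ?_
    have hδ' : (0:ℝ) < (δ:ℝ)/2 := by positivity
    have cL : ∃ N, eVariationOn γ (J N ∩ Iic t) ≤ ENNReal.ofReal L + ENNReal.ofReal ((δ:ℝ)/2) := by
      rcases eq_empty_or_nonempty (I ∩ Set.Iio t) with he | hne
      · refine ⟨0, ?_⟩
        have hsub : J 0 ∩ Iic t ⊆ {t} := by
          rintro x ⟨hx, hxt⟩
          rcases lt_or_eq_of_le (mem_Iic.mp hxt) with h | h
          · have : x ∈ I ∩ Set.Iio t := ⟨hx.2, h⟩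
            rw [he] at this
            exact this.elim
          · simp [h]
        have h0 : eVariationOn γ (J 0 ∩ Iic t) = 0 :=
          le_antisymm (le_of_le_of_eq (eVariationOn.mono γ hsub)
            (eVariationOn.subsingleton γ subsingleton_singleton)) (zero_le)
        rw [h0]
        exact zero_le
      · obtain ⟨hat', hLinf, hsubI⟩ := hLne hne
        obtain ⟨s, hs, hWs⟩ : ∃ s ∈ Ioo a t,
            eVariationOn γ (Icc s t) < ENNReal.ofReal L + ENNReal.ofReal ((δ:ℝ)/2) := by
          by_contra hcon
          push_neg at hcon
          have h1 : ENNReal.ofReal L + ENNReal.ofReal ((δ:ℝ)/2) ≤ ENNReal.ofReal L := by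
            conv_rhs => rw [← hLinf]
            exact le_iInf₂ hcon
          exact absurd h1 (not_le.mpr (ENNReal.lt_add_right ENNReal.ofReal_ne_top
            (ENNReal.ofReal_pos.mpr hδ').ne'))
        obtain ⟨N, hN⟩ := exists_nat_one_div_lt (sub_pos.mpr hs.2)
        refine ⟨N, le_trans (eVariationOn.mono γ ?_) hWs.le⟩
        rintro x ⟨⟨hx1, hxI⟩, hxt⟩
        have h2 : ε N < t - s := (hεdef N) ▸ hN
        exact ⟨by linarith [hx1.1], hxt⟩
    have cR : ∃ N, eVariationOn γ (J N ∩ Ici t) ≤ ENNReal.ofReal R + ENNReal.ofReal ((δ:ℝ)/2) := by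
      rcases eq_empty_or_nonempty (I ∩ Set.Ioi t) with he | hne
      · refine ⟨0, ?_⟩
        have hsub : J 0 ∩ Ici t ⊆ {t} := by
          rintro x ⟨hx, hxt⟩
          rcases lt_or_eq_of_le (mem_Ici.mp hxt) with h | h
          · have : x ∈ I ∩ Set.Ioi t := ⟨hx.2, h⟩
            rw [he] at this
            exact this.elim
          · simp [← h]
        have h0 : eVariationOn γ (J 0 ∩ Ici t) = 0 :=
          le_antisymm (le_of_le_of_eq (eVariationOn.mono γ hsub)
            (eVariationOn.subsingleton γ subsingleton_singleton)) (zero_le)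
        rw [h0]
        exact zero_le
      · obtain ⟨htb', hRinf, hsubI⟩ := hRne hne
        obtain ⟨s, hs, hWs⟩ : ∃ s ∈ Ioo t b,
            eVariationOn γ (Icc t s) < ENNReal.ofReal R + ENNReal.ofReal ((δ:ℝ)/2) := by
          by_contra hcon
          push_neg at hcon
          have h1 : ENNReal.ofReal R + ENNReal.ofReal ((δ:ℝ)/2) ≤ ENNReal.ofReal R := by
            conv_rhs => rw [← hRinf]
            exact le_iInf₂ hcon
          exact absurd h1 (not_le.mpr (ENNReal.lt_add_right ENNReal.ofReal_ne_top
            (ENNReal.ofReal_pos.mpr hδ').ne'))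
        obtain ⟨N, hN⟩ := exists_nat_one_div_lt (sub_pos.mpr hs.1)
        refine ⟨N, le_trans (eVariationOn.mono γ ?_) hWs.le⟩
        rintro x ⟨⟨hx1, hxI⟩, hxt⟩
        have h2 : ε N < s - t := (hεdef N) ▸ hN
        exact ⟨hxt, by linarith [hx1.2]⟩
    obtain ⟨N₁, hc1⟩ := cL
    obtain ⟨N₂, hc2⟩ := cR
    have hhalf : ENNReal.ofReal ((δ:ℝ)/2) + ENNReal.ofReal ((δ:ℝ)/2) = (δ : ℝ≥0∞) := by
      rw [← ENNReal.ofReal_add hδ'.le hδ'.le, add_halves, ENNReal.ofReal_coe_nnreal]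
    calc (⨅ k, ν (J k)) ≤ ν (J (max N₁ N₂)) := iInf_le _ _
      _ = eVariationOn γ (J (max N₁ N₂)) := hνJ _
      _ = eVariationOn γ ((J (max N₁ N₂) ∩ Iic t) ∪ (J (max N₁ N₂) ∩ Ici t)) := by
        rw [← inter_union_distrib_left, Iic_union_Ici, inter_univ]
      _ = eVariationOn γ (J (max N₁ N₂) ∩ Iic t) + eVariationOn γ (J (max N₁ N₂) ∩ Ici t) :=
        eVariationOn.union γ ⟨⟨htJ _, self_mem_Iic⟩, fun y hy => hy.2⟩
          ⟨⟨htJ _, self_mem_Ici⟩, fun y hy => hy.2⟩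
      _ ≤ (ENNReal.ofReal L + ENNReal.ofReal ((δ:ℝ)/2)) + (ENNReal.ofReal R + ENNReal.ofReal ((δ:ℝ)/2)) := by
        refine add_le_add (le_trans (eVariationOn.mono γ ?_) hc1)
          (le_trans (eVariationOn.mono γ ?_) hc2)
        · exact inter_subset_inter (hJanti (le_max_left _ _)) Subset.rfl
        · exact inter_subset_inter (hJanti (le_max_right _ _)) Subset.rfl
      _ = ENNReal.ofReal L + ENNReal.ofReal R + δ := by
        rw [← hhalf]; ring
  rw [hinf, ENNReal.ofReal_add hL0 hR0]
  exact le_antisymm hle hge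
end

section
/- Let γ : I → X be locally of bounded variation with speed measure ν. Then ν is continuous (has no atoms, i.e. ν({t}) = 0 for all t ∈ I) if and only if γ is continuous. Moreover, if γ is continuous, then ν(J) = Var(γ;J) for every subinterval J ⊆ I. -/
open Filter Topology Set MeasureTheory

open ENNReal

private lemma var_right {X : Type*} [MetricSpace X] (I : Set ℝ) (hI : I.OrdConnected) (γ : ℝ → X)
    (hγ : ∀ a ∈ I, ∀ b ∈ I, a ≤ b → eVariationOn γ (Set.Icc a b) < ⊤)
    {t : ℝ} (ht : t ∈ I) (hc : ContinuousWithinAt γ I t)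
    {ε : ℝ≥0∞} (hε : 0 < ε) (hεT : ε ≠ ⊤) :
    ∃ s, t < s ∧ eVariationOn γ (I ∩ Set.Icc t s) < ε := by
  by_cases hb : ∃ b ∈ I, t < b
  · obtain ⟨b, hbI, htb⟩ := hb
    set v : ℝ → ℝ≥0∞ := fun s => eVariationOn γ (I ∩ Set.Icc t s) with hv
    have hmono : ∀ ⦃s s'⦄, s ≤ s' → v s ≤ v s' := fun s s' hss' =>
      eVariationOn.mono γ (inter_subset_inter_right _ (Icc_subset_Icc le_rfl hss'))
    have hvb : v b < ⊤ :=
      lt_of_le_of_lt (eVariationOn.mono γ inter_subset_right) (hγ t ht b hbI htb.le)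
    by_contra hcon
    push_neg at hcon
    have hlow : ∀ s, t < s → ε ≤ v s := hcon
    set δ := ε / 3 with hδ
    have hδ0 : 0 < δ := ENNReal.div_pos hε.ne' (by norm_num)
    have hδT : δ < ⊤ := ENNReal.div_lt_top hεT (by norm_num)
    have h2δ : δ + δ < ε := by
      calc δ + δ < δ + δ + δ := ENNReal.lt_add_right (by finiteness) hδ0.ne'
        _ = ε := ENNReal.add_thirds ε
    have hδε : δ < ε := lt_of_le_of_lt le_add_self h2δ
    have hev : ∀ᶠ x in 𝓝[I] t, edist (γ x) (γ t) < δ := (EMetric.tendsto_nhds.1 hc) δ hδ0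
    obtain ⟨η, hη0, hηsub⟩ := Metric.mem_nhdsWithin_iff.1 hev
    set s₁ := min b (t + η / 2) with hs₁
    have hts₁ : t < s₁ := lt_min htb (by linarith)
    have hs₁b : s₁ ≤ b := min_le_left _ _
    have hs₁η : s₁ ≤ t + η / 2 := min_le_right _ _
    have hv₁T : v s₁ < ⊤ := lt_of_le_of_lt (hmono hs₁b) hvb
    have hv₁0 : v s₁ ≠ 0 := fun h => absurd (hlow s₁ hts₁) (by rw [h]; exact not_le.2 hε)
    have hsub : v s₁ - δ < v s₁ := ENNReal.sub_lt_self hv₁T.ne hv₁0 hδ0.ne'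
    obtain ⟨⟨n, u, hu, us⟩, hS⟩ := lt_iSup_iff.1 (show v s₁ - δ <
        ⨆ p : ℕ × {u : ℕ → ℝ // Monotone u ∧ ∀ i, u i ∈ I ∩ Set.Icc t s₁},
          ∑ i ∈ Finset.range p.1, edist (γ (p.2.1 (i+1))) (γ (p.2.1 i)) from hsub)
    set f : ℕ → ℝ≥0∞ := fun i => edist (γ (u (i+1))) (γ (u i)) with hf
    set S := ∑ i ∈ Finset.range n, f i with hSdef
    have hvS : v s₁ ≤ S + δ := tsub_le_iff_right.1 hS.le
    by_cases hex : ∃ i, i ≤ n ∧ t < u i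
    · obtain ⟨i₀, hi₀n, hi₀⟩ := hex
      have hex' : ∃ i, t < u i := ⟨i₀, hi₀⟩
      obtain ⟨k, hkn, htk, hjt⟩ : ∃ k, k ≤ n ∧ t < u k ∧ ∀ j < k, u j = t :=
        ⟨Nat.find hex', le_trans (Nat.find_min' hex' hi₀) hi₀n, Nat.find_spec hex',
          fun j hj => le_antisymm (not_lt.1 (Nat.find_min hex' hj)) (us j).2.1⟩
      have hrex : (I ∩ Set.Ioo t (u k)).Nonempty := by
        by_contra hne
        rw [not_nonempty_iff_eq_empty] at hne
        have h1 : t < (t + u k) / 2 := by linarith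
        have h2 : (t + u k) / 2 < u k := by linarith
        have hsub2 : I ∩ Set.Icc t ((t + u k) / 2) ⊆ {t} := by
          rintro x ⟨hxI, hxt, hxs⟩
          rcases eq_or_lt_of_le hxt with h | h
          · simp [← h]
          · exact absurd (show x ∈ I ∩ Set.Ioo t (u k) from ⟨hxI, h, by linarith⟩)
              (by rw [hne]; exact notMem_empty x)
        have hz : v ((t + u k) / 2) = 0 :=
          eVariationOn.subsingleton γ (subsingleton_singleton.anti hsub2)
        exact absurd (hlow _ h1) (by rw [hz]; exact not_le.2 hε)
      obtain ⟨r, hrI, htr, hrk⟩ := hrex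
      have huks₁ : u k ≤ s₁ := (us k).2.2
      have hrs₁ : r ≤ s₁ := le_of_lt (lt_of_lt_of_le hrk huks₁)
      have hrδ : edist (γ r) (γ t) < δ := hηsub ⟨by
        rw [Metric.mem_ball, Real.dist_eq, abs_lt]; constructor <;> linarith, hrI⟩
      set w : ℕ → ℝ := fun i => if i = 0 then r else u (k + (i - 1)) with hw
      have hw0 : w 0 = r := rfl
      have hwsucc : ∀ i, w (i + 1) = u (k + i) := fun i => by simp [hw]
      have hwmono : Monotone w := monotone_nat_of_le_succ (fun i => by
        cases i with
        | zero => rw [hw0, hwsucc, Nat.add_zero]; exact hrk.le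
        | succ m => rw [hwsucc, hwsucc]; exact hu (by omega))
      have hwmem : ∀ i, w i ∈ I ∩ Set.Icc r s₁ := fun i => by
        cases i with
        | zero => exact ⟨hrI, le_rfl, hrs₁⟩
        | succ m =>
          rw [hwsucc]
          exact ⟨(us _).1, le_trans hrk.le (hu (Nat.le_add_right k m)), (us _).2.2⟩
      set T := ∑ i ∈ Finset.range (n - k), f (k + i) with hT
      set W := eVariationOn γ (I ∩ Set.Icc r s₁) with hWdef
      have hTW : edist (γ (u k)) (γ r) + T ≤ W := by
        have hle := eVariationOn.sum_le (f := γ) (n := n - k + 1) hwmono hwmem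
        rw [Finset.sum_range_succ'] at hle
        have e0 : edist (γ (w (0 + 1))) (γ (w 0)) = edist (γ (u k)) (γ r) := by
          rw [hwsucc, hw0, Nat.add_zero]
        have e1 : ∀ i ∈ Finset.range (n - k),
            edist (γ (w (i + 1 + 1))) (γ (w (i + 1))) = f (k + i) := fun i _ => by
          rw [hwsucc, hwsucc, hf]
          simp [Nat.add_assoc]
        rw [e0, Finset.sum_congr rfl e1] at hle
        rw [add_comm]
        exact hle
      have hrt : edist (γ (u k)) (γ t) ≤ edist (γ (u k)) (γ r) + δ :=
        le_trans (edist_triangle _ (γ r) _) (add_le_add_right hrδ.le _)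
      have hST : S ≤ edist (γ (u k)) (γ t) + T := by
        have hsplit : ∑ i ∈ Finset.Ico 0 k, f i + ∑ i ∈ Finset.Ico k n, f i
            = ∑ i ∈ Finset.Ico 0 n, f i := Finset.sum_Ico_consecutive _ (Nat.zero_le k) hkn
        have h2 : ∑ i ∈ Finset.Ico k n, f i = T := by
          rw [hT, Finset.sum_Ico_eq_sum_range]
        have h1 : ∑ i ∈ Finset.Ico 0 k, f i ≤ edist (γ (u k)) (γ t) := by
          cases k with
          | zero => simp
          | succ m =>
            rw [← Finset.range_eq_Ico, Finset.sum_range_succ]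
            have hz : ∑ i ∈ Finset.range m, f i = 0 := Finset.sum_eq_zero fun i hi => by
              have him := Finset.mem_range.1 hi
              rw [hf]
              simp only []
              rw [hjt i (by omega), hjt (i+1) (by omega), edist_self]
            rw [hz, zero_add, hf]
            simp only []
            rw [hjt m (by omega)]
        calc S = ∑ i ∈ Finset.Ico 0 k, f i + ∑ i ∈ Finset.Ico k n, f i := by
                rw [hsplit, hSdef, Finset.range_eq_Ico]
          _ ≤ edist (γ (u k)) (γ t) + T := by rw [h2]; exact add_le_add_left h1 _
      have hSW : S ≤ W + δ := by
        calc S ≤ edist (γ (u k)) (γ t) + T := hST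
          _ ≤ (edist (γ (u k)) (γ r) + δ) + T := add_le_add_left hrt _
          _ = (edist (γ (u k)) (γ r) + T) + δ := by ring
          _ ≤ W + δ := add_le_add_left hTW δ
      have hsplitv : v r + W = v s₁ := eVariationOn.Icc_add_Icc γ (le_of_lt htr) hrs₁ hrI
      have hWT : W ≠ ⊤ :=
        ne_top_of_le_ne_top hv₁T.ne (le_trans le_add_self hsplitv.le)
      have hfinal : v r + W ≤ (δ + δ) + W := by
        calc v r + W = v s₁ := hsplitv
          _ ≤ S + δ := hvS
          _ ≤ (W + δ) + δ := add_le_add_left hSW δ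
          _ = (δ + δ) + W := by ring
      have hvr : v r ≤ δ + δ := (ENNReal.add_le_add_iff_right hWT).1 hfinal
      exact absurd (le_trans (hlow r htr) hvr) (not_le.2 h2δ)
    · push_neg at hex
      have hSz : S = 0 := Finset.sum_eq_zero fun i hi => by
        have hui : ∀ j, j ≤ n → u j = t := fun j hj =>
          le_antisymm (hex j hj) (us j).2.1
        rw [hf]
        simp only []
        rw [hui i (by exact le_of_lt (Finset.mem_range.1 hi)),
          hui (i+1) (Finset.mem_range.1 hi), edist_self]
      have : ε ≤ δ := le_trans (hlow s₁ hts₁) (by rw [hSz, zero_add] at hvS; exact hvS)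
      exact absurd this (not_le.2 hδε)
  · refine ⟨t + 1, by linarith, ?_⟩
    have hsub : I ∩ Set.Icc t (t + 1) ⊆ {t} := by
      rintro x ⟨hxI, hxt, _⟩
      rcases eq_or_lt_of_le hxt with h | h
      · simp [← h]
      · exact absurd ⟨x, hxI, h⟩ hb
    rw [eVariationOn.subsingleton γ (subsingleton_singleton.anti hsub)]
    exact hε

private lemma var_left {X : Type*} [MetricSpace X] (I : Set ℝ) (hI : I.OrdConnected) (γ : ℝ → X)
    (hγ : ∀ a ∈ I, ∀ b ∈ I, a ≤ b → eVariationOn γ (Set.Icc a b) < ⊤)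
    {t : ℝ} (ht : t ∈ I) (hc : ContinuousWithinAt γ I t)
    {ε : ℝ≥0∞} (hε : 0 < ε) (hεT : ε ≠ ⊤) :
    ∃ s, s < t ∧ eVariationOn γ (I ∩ Set.Icc s t) < ε := by
  set I' : Set ℝ := Neg.neg ⁻¹' I with hI'def
  have hI' : I'.OrdConnected :=
    ⟨fun x hx y hy z hz => hI.out hy hx ⟨neg_le_neg hz.2, neg_le_neg hz.1⟩⟩
  have hneg : ∀ s : Set ℝ, eVariationOn (γ ∘ Neg.neg) s = eVariationOn γ (Neg.neg '' s) :=
    fun s => eVariationOn.comp_eq_of_antitoneOn γ Neg.neg (fun a _ b _ hab => neg_le_neg hab)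
  have hγ' : ∀ a ∈ I', ∀ b ∈ I', a ≤ b → eVariationOn (γ ∘ Neg.neg) (Set.Icc a b) < ⊤ := by
    intro a ha b hb hab
    rw [hneg, Set.image_neg_Icc]
    exact hγ _ hb _ ha (neg_le_neg hab)
  have ht' : -t ∈ I' := by simpa [hI'def] using ht
  have hc' : ContinuousWithinAt (γ ∘ Neg.neg) I' (-t) := by
    refine ContinuousWithinAt.comp ?_ continuous_neg.continuousWithinAt (fun x hx => hx)
    simpa using hc
  obtain ⟨s, hs, hvar⟩ := var_right I' hI' (γ ∘ Neg.neg) hγ' ht' hc' hε hεT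
  refine ⟨-s, by linarith, ?_⟩
  have himg : Neg.neg '' (I' ∩ Set.Icc (-t) s) = I ∩ Set.Icc (-s) t := by
    rw [Set.image_inter neg_injective, Set.image_neg_Icc, neg_neg]
    congr 1
    ext x
    simp [hI'def]
  rw [hneg, himg] at hvar
  exact hvar

private lemma var_fin {X : Type*} [MetricSpace X] (I : Set ℝ) (hI : I.OrdConnected) (γ : ℝ → X)
    (hγ : ∀ a ∈ I, ∀ b ∈ I, a ≤ b → eVariationOn γ (Set.Icc a b) < ⊤)
    {t : ℝ} (ht : t ∈ I) :
    ∃ a c : ℝ, a < t ∧ t < c ∧ eVariationOn γ (I ∩ Set.Icc a c) < ⊤ := by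
  have hr : ∃ c, t < c ∧ eVariationOn γ (I ∩ Set.Icc t c) < ⊤ := by
    by_cases hb : ∃ b ∈ I, t < b
    · obtain ⟨b, hbI, htb⟩ := hb
      exact ⟨b, htb, lt_of_le_of_lt (eVariationOn.mono γ inter_subset_right)
        (hγ t ht b hbI htb.le)⟩
    · refine ⟨t + 1, by linarith, ?_⟩
      have hsub : I ∩ Set.Icc t (t + 1) ⊆ {t} := by
        rintro x ⟨hxI, hxt, _⟩
        rcases eq_or_lt_of_le hxt with h | h
        · simp [← h]
        · exact absurd ⟨x, hxI, h⟩ hb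
      rw [eVariationOn.subsingleton γ (subsingleton_singleton.anti hsub)]
      exact ENNReal.zero_lt_top
  have hl : ∃ a, a < t ∧ eVariationOn γ (I ∩ Set.Icc a t) < ⊤ := by
    by_cases hb : ∃ b ∈ I, b < t
    · obtain ⟨b, hbI, htb⟩ := hb
      exact ⟨b, htb, lt_of_le_of_lt (eVariationOn.mono γ inter_subset_right)
        (hγ b hbI t ht htb.le)⟩
    · refine ⟨t - 1, by linarith, ?_⟩
      have hsub : I ∩ Set.Icc (t - 1) t ⊆ {t} := by
        rintro x ⟨hxI, _, hxt⟩
        rcases eq_or_lt_of_le hxt with h | h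
        · simp [h]
        · exact absurd ⟨x, hxI, h⟩ hb
      rw [eVariationOn.subsingleton γ (subsingleton_singleton.anti hsub)]
      exact ENNReal.zero_lt_top
  obtain ⟨c, htc, hc⟩ := hr
  obtain ⟨a, hat, ha⟩ := hl
  refine ⟨a, c, hat, htc, ?_⟩
  rw [← eVariationOn.Icc_add_Icc γ hat.le htc.le ht]
  exact ENNReal.add_lt_top.2 ⟨ha, hc⟩

private lemma atom_zero {X : Type*} [MetricSpace X] (I : Set ℝ) (hI : I.OrdConnected)
    (γ : ℝ → X)
    (hγ : ∀ a ∈ I, ∀ b ∈ I, a ≤ b → eVariationOn γ (Set.Icc a b) < ⊤)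
    (ν : Measure ℝ) (hν : IsSpeedMeasure γ I ν)
    (hcont : ContinuousOn γ I) {t : ℝ} (ht : t ∈ I) : ν {t} = 0 := by
  refine le_antisymm ?_ zero_le
  refine ENNReal.le_of_forall_pos_le_add fun ε hε h0 => ?_
  rw [zero_add]
  have hε2 : (0 : ℝ≥0∞) < (ε : ℝ≥0∞) / 2 :=
    ENNReal.div_pos (by exact_mod_cast hε.ne') (by norm_num)
  have hε2T : (ε : ℝ≥0∞) / 2 ≠ ⊤ := (ENNReal.div_lt_top ENNReal.coe_ne_top (by norm_num)).ne
  obtain ⟨s', hs', hvr⟩ := var_right I hI γ hγ ht (hcont t ht) hε2 hε2T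
  obtain ⟨s, hs, hvl⟩ := var_left I hI γ hγ ht (hcont t ht) hε2 hε2T
  have hK := hν.2 (I ∩ Set.Ioo s s') inter_subset_left (hI.inter ordConnected_Ioo)
    ⟨Set.Ioo s s', isOpen_Ioo, Set.inter_comm _ _⟩
  calc ν {t} ≤ ν (I ∩ Set.Ioo s s') :=
        measure_mono (singleton_subset_iff.2 ⟨ht, hs, hs'⟩)
    _ = eVariationOn γ (I ∩ Set.Ioo s s') := hK
    _ ≤ eVariationOn γ (I ∩ Set.Icc s s') :=
        eVariationOn.mono γ (inter_subset_inter_right _ Set.Ioo_subset_Icc_self)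
    _ = eVariationOn γ (I ∩ Set.Icc s t) + eVariationOn γ (I ∩ Set.Icc t s') :=
        (eVariationOn.Icc_add_Icc γ hs.le hs'.le ht).symm
    _ ≤ (ε : ℝ≥0∞) / 2 + (ε : ℝ≥0∞) / 2 := add_le_add hvl.le hvr.le
    _ = (ε : ℝ≥0∞) := ENNReal.add_halves _

private lemma cont_of_atomless {X : Type*} [MetricSpace X] (I : Set ℝ) (hI : I.OrdConnected)
    (γ : ℝ → X)
    (hγ : ∀ a ∈ I, ∀ b ∈ I, a ≤ b → eVariationOn γ (Set.Icc a b) < ⊤)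
    (ν : Measure ℝ) (hν : IsSpeedMeasure γ I ν)
    (hat : ∀ t ∈ I, ν {t} = 0) : ContinuousOn γ I := by
  intro t ht
  obtain ⟨a, c, hat', htc, hfin⟩ := var_fin I hI γ hγ ht
  set J : ℕ → Set ℝ :=
    fun n => I ∩ Set.Ioo (max a (t - 1 / ((n : ℝ) + 1))) (min c (t + 1 / ((n : ℝ) + 1))) with hJ
  have hpos : ∀ n : ℕ, (0 : ℝ) < 1 / ((n : ℝ) + 1) := fun n => by positivity
  have htJ : ∀ n, t ∈ J n := fun n =>
    ⟨ht, max_lt hat' (by have := hpos n; linarith), lt_min htc (by have := hpos n; linarith)⟩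
  have hJanti : Antitone J := by
    intro m n hmn
    have h1 : 1 / ((n : ℝ) + 1) ≤ 1 / ((m : ℝ) + 1) :=
      one_div_le_one_div_of_le (by positivity) (by exact_mod_cast by omega)
    exact inter_subset_inter_right _ (Set.Ioo_subset_Ioo
      (max_le_max le_rfl (by linarith)) (min_le_min le_rfl (by linarith)))
  have hJrep : ∀ n, ν (J n) = eVariationOn γ (J n) := fun n =>
    hν.2 (J n) inter_subset_left (hI.inter ordConnected_Ioo)
      ⟨_, isOpen_Ioo, Set.inter_comm _ _⟩
  have hJmeas : ∀ n, NullMeasurableSet (J n) ν := by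
    intro n
    have hae : (Set.Ioo (max a (t - 1 / ((n : ℝ) + 1))) (min c (t + 1 / ((n : ℝ) + 1)))
        : Set ℝ) =ᵐ[ν] J n := by
      rw [MeasureTheory.ae_eq_set]
      constructor
      · refine measure_mono_null (fun x hx => ?_) hν.1
        exact fun hxI => hx.2 ⟨hxI, hx.1⟩
      · exact measure_mono_null (fun x hx => (hx.2 hx.1.2).elim) measure_empty
    exact (measurableSet_Ioo.nullMeasurableSet).congr hae
  have hJfin : ν (J 0) ≠ ⊤ := by
    rw [hJrep 0]
    refine (lt_of_le_of_lt (eVariationOn.mono γ (inter_subset_inter_right _ ?_)) hfin).ne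
    exact fun x hx => ⟨le_trans (le_max_left _ _) hx.1.le, le_trans hx.2.le (min_le_left _ _)⟩
  have hinter : ⋂ n, J n = {t} := by
    ext x
    simp only [Set.mem_iInter, mem_singleton_iff]
    constructor
    · intro hx
      have habs : ∀ n : ℕ, |x - t| < 1 / ((n : ℝ) + 1) := fun n => by
        obtain ⟨hxI, h1, h2⟩ := hx n
        have ha1 := lt_of_le_of_lt (le_max_right _ _) h1
        have ha2 := lt_of_lt_of_le h2 (min_le_right _ _)
        rw [abs_lt]
        constructor <;> linarith
      by_contra hne
      have hpos' : 0 < |x - t| := abs_pos.2 (sub_ne_zero.2 hne)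
      obtain ⟨n, hn⟩ := exists_nat_one_div_lt hpos'
      exact absurd (habs n) (not_lt.2 hn.le)
    · rintro rfl
      exact htJ
  have htend : Tendsto (ν ∘ J) atTop (𝓝 0) := by
    have h := MeasureTheory.tendsto_measure_iInter_atTop hJmeas hJanti ⟨0, hJfin⟩
    rwa [hinter, hat t ht] at h
  refine EMetric.tendsto_nhds.2 fun ε hε => ?_
  obtain ⟨n, hn⟩ := (htend.eventually (gt_mem_nhds hε)).exists
  have hmem : Set.Ioo (max a (t - 1 / ((n : ℝ) + 1))) (min c (t + 1 / ((n : ℝ) + 1))) ∩ I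
      ∈ 𝓝[I] t :=
    mem_nhdsWithin.2 ⟨_, isOpen_Ioo, (htJ n).2, fun x hx => hx⟩
  refine Filter.mem_of_superset hmem ?_
  rintro x ⟨hx1, hx2⟩
  have hxJ : x ∈ J n := ⟨hx2, hx1⟩
  calc edist (γ x) (γ t) ≤ eVariationOn γ (J n) := eVariationOn.edist_le γ hxJ (htJ n)
    _ = ν (J n) := (hJrep n).symm
    _ < ε := hn

private lemma var_le_nu {X : Type*} [MetricSpace X] (I : Set ℝ) (hI : I.OrdConnected)
    (γ : ℝ → X)
    (hγ : ∀ a ∈ I, ∀ b ∈ I, a ≤ b → eVariationOn γ (Set.Icc a b) < ⊤)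
    (ν : Measure ℝ) (hν : IsSpeedMeasure γ I ν) (hcont : ContinuousOn γ I)
    (J : Set ℝ) (hJI : J ⊆ I) (hJc : J.OrdConnected) :
    eVariationOn γ J ≤ ν J := by
  refine iSup_le ?_
  rintro ⟨n, u, hu, us⟩
  dsimp only
  by_cases h0n : u 0 < u n
  · refine ENNReal.le_of_forall_pos_le_add fun ε hε hνT => ?_
    have hε2 : (0 : ℝ≥0∞) < (ε : ℝ≥0∞) / 2 :=
      ENNReal.div_pos (by exact_mod_cast hε.ne') (by norm_num)
    have hε2T : (ε : ℝ≥0∞) / 2 ≠ ⊤ :=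
      (ENNReal.div_lt_top ENNReal.coe_ne_top (by norm_num)).ne
    have h0I : u 0 ∈ I := hJI (us 0)
    have hnI : u n ∈ I := hJI (us n)
    obtain ⟨a', ha'gt, ha'var⟩ := var_right I hI γ hγ h0I (hcont _ h0I) hε2 hε2T
    set a := min a' ((u 0 + u n) / 2) with ha
    have h0a : u 0 < a := lt_min ha'gt (by linarith)
    have han : a < u n := lt_of_le_of_lt (min_le_right _ _) (by linarith)
    have haI : a ∈ I := hI.out h0I hnI ⟨h0a.le, han.le⟩
    have havar : eVariationOn γ (I ∩ Set.Icc (u 0) a) < (ε : ℝ≥0∞) / 2 :=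
      lt_of_le_of_lt (eVariationOn.mono γ (inter_subset_inter_right _
        (Set.Icc_subset_Icc_right (min_le_left _ _)))) ha'var
    obtain ⟨b', hb'lt, hb'var⟩ := var_left I hI γ hγ hnI (hcont _ hnI) hε2 hε2T
    set b := max b' a with hb
    have hab : a ≤ b := le_max_right _ _
    have hbn : b < u n := max_lt hb'lt han
    have hbI : b ∈ I := hI.out h0I hnI ⟨le_trans h0a.le hab, hbn.le⟩
    have hbvar : eVariationOn γ (I ∩ Set.Icc b (u n)) < (ε : ℝ≥0∞) / 2 :=
      lt_of_le_of_lt (eVariationOn.mono γ (inter_subset_inter_right _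
        (Set.Icc_subset_Icc_left (le_max_left _ _)))) hb'var
    have hsum : ∑ i ∈ Finset.range n, edist (γ (u (i + 1))) (γ (u i))
        ≤ eVariationOn γ (I ∩ Set.Icc (u 0) (u n)) := by
      have hu' : Monotone (fun i => u (min i n)) :=
        hu.comp (fun i j hij => min_le_min hij le_rfl)
      have hmem : ∀ i, u (min i n) ∈ I ∩ Set.Icc (u 0) (u n) := fun i =>
        ⟨hJI (us _), hu (Nat.zero_le _), hu (min_le_right _ _)⟩
      have hle := eVariationOn.sum_le (f := γ) (n := n) hu' hmem
      refine le_trans (le_of_eq (Finset.sum_congr rfl fun i hi => ?_)) hle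
      have hin := Finset.mem_range.1 hi
      rw [min_eq_left (Nat.succ_le.2 hin), min_eq_left hin.le]
    have hdec : eVariationOn γ (I ∩ Set.Icc (u 0) (u n))
        = eVariationOn γ (I ∩ Set.Icc (u 0) a) + eVariationOn γ (I ∩ Set.Icc a b)
          + eVariationOn γ (I ∩ Set.Icc b (u n)) := by
      rw [add_assoc, ← eVariationOn.Icc_add_Icc γ h0a.le han.le haI,
        ← eVariationOn.Icc_add_Icc γ hab hbn.le hbI]
    have hmid : eVariationOn γ (I ∩ Set.Icc a b) ≤ ν J := by
      have hsubJ : I ∩ Set.Ioo (u 0) (u n) ⊆ J := fun x hx =>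
        hJc.out (us 0) (us n) ⟨hx.2.1.le, hx.2.2.le⟩
      calc eVariationOn γ (I ∩ Set.Icc a b)
          ≤ eVariationOn γ (I ∩ Set.Ioo (u 0) (u n)) :=
            eVariationOn.mono γ (inter_subset_inter_right _
              (fun x hx => ⟨lt_of_lt_of_le h0a hx.1, lt_of_le_of_lt hx.2 hbn⟩))
        _ = ν (I ∩ Set.Ioo (u 0) (u n)) :=
            (hν.2 _ inter_subset_left (hI.inter ordConnected_Ioo)
              ⟨_, isOpen_Ioo, Set.inter_comm _ _⟩).symm
        _ ≤ ν J := measure_mono hsubJ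
    calc ∑ i ∈ Finset.range n, edist (γ (u (i + 1))) (γ (u i))
        ≤ eVariationOn γ (I ∩ Set.Icc (u 0) (u n)) := hsum
      _ = eVariationOn γ (I ∩ Set.Icc (u 0) a) + eVariationOn γ (I ∩ Set.Icc a b)
          + eVariationOn γ (I ∩ Set.Icc b (u n)) := hdec
      _ ≤ (ε : ℝ≥0∞) / 2 + ν J + (ε : ℝ≥0∞) / 2 :=
          add_le_add (add_le_add havar.le hmid) hbvar.le
      _ = ν J + ((ε : ℝ≥0∞) / 2 + (ε : ℝ≥0∞) / 2) := by ring
      _ = ν J + (ε : ℝ≥0∞) := by rw [ENNReal.add_halves]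
  · have hz : ∀ i ∈ Finset.range n, edist (γ (u (i + 1))) (γ (u i)) = 0 := fun i hi => by
      have hin := Finset.mem_range.1 hi
      have h1 : u i = u 0 :=
        le_antisymm (le_trans (hu hin.le) (not_lt.1 h0n)) (hu (Nat.zero_le i))
      have h2 : u (i + 1) = u 0 :=
        le_antisymm (le_trans (hu hin) (not_lt.1 h0n)) (hu (Nat.zero_le _))
      rw [h1, h2, edist_self]
    rw [Finset.sum_eq_zero hz]
    exact zero_le

private lemma nu_le_var {X : Type*} [MetricSpace X] (I : Set ℝ) (hI : I.OrdConnected)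
    (γ : ℝ → X)
    (hγ : ∀ a ∈ I, ∀ b ∈ I, a ≤ b → eVariationOn γ (Set.Icc a b) < ⊤)
    (ν : Measure ℝ) (hν : IsSpeedMeasure γ I ν) (hcont : ContinuousOn γ I)
    (J : Set ℝ) (hJI : J ⊆ I) (hJc : J.OrdConnected) :
    ν J ≤ eVariationOn γ J := by
  set J' : Set ℝ := {x | x ∈ J ∧ (∃ p ∈ J, p < x) ∧ ∃ q ∈ J, x < q} with hJ'def
  have hJ'eq : J' = (⋃ p ∈ J, ⋃ q ∈ J, Set.Ioo p q) ∩ I := by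
    ext x
    simp only [hJ'def, mem_setOf_eq, Set.mem_inter_iff, Set.mem_iUnion, Set.mem_Ioo]
    constructor
    · rintro ⟨hxJ, ⟨p, hp, hpx⟩, ⟨q, hq, hxq⟩⟩
      exact ⟨⟨p, hp, q, hq, hpx, hxq⟩, hJI hxJ⟩
    · rintro ⟨⟨p, hp, q, hq, hpx, hxq⟩, hxI⟩
      exact ⟨hJc.out hp hq ⟨hpx.le, hxq.le⟩, ⟨p, hp, hpx⟩, ⟨q, hq, hxq⟩⟩
  have hJ'sub : J' ⊆ J := fun x hx => hx.1
  have hJ'c : J'.OrdConnected := by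
    constructor
    rintro x ⟨hxJ, ⟨p, hp, hpx⟩, -⟩ y ⟨hyJ, -, ⟨q, hq, hyq⟩⟩ z hz
    exact ⟨hJc.out hxJ hyJ hz, ⟨p, hp, lt_of_lt_of_le hpx hz.1⟩,
      ⟨q, hq, lt_of_le_of_lt hz.2 hyq⟩⟩
  have hν' : ν J' = eVariationOn γ J' :=
    hν.2 J' (subset_trans hJ'sub hJI) hJ'c
      ⟨_, isOpen_biUnion (fun p _ => isOpen_biUnion fun q _ => isOpen_Ioo), hJ'eq⟩
  have hL : ν {x | IsLeast J x} = 0 := by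
    rcases em (∃ a, IsLeast J a) with ⟨a, ha⟩ | h
    · exact measure_mono_null (fun x hx => hx.unique ha)
        (atom_zero I hI γ hγ ν hν hcont (hJI ha.1))
    · exact measure_mono_null (fun x hx => (h ⟨x, hx⟩).elim) measure_empty
  have hG : ν {x | IsGreatest J x} = 0 := by
    rcases em (∃ a, IsGreatest J a) with ⟨a, ha⟩ | h
    · exact measure_mono_null (fun x hx => hx.unique ha)
        (atom_zero I hI γ hγ ν hν hcont (hJI ha.1))
    · exact measure_mono_null (fun x hx => (h ⟨x, hx⟩).elim) measure_empty
  have hcover : J ⊆ J' ∪ ({x | IsLeast J x} ∪ {x | IsGreatest J x}) := by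
    intro x hx
    by_cases h1 : ∃ p ∈ J, p < x
    · by_cases h2 : ∃ q ∈ J, x < q
      · exact Or.inl ⟨hx, h1, h2⟩
      · exact Or.inr (Or.inr ⟨hx, fun q hq => not_lt.1 fun h => h2 ⟨q, hq, h⟩⟩)
    · exact Or.inr (Or.inl ⟨hx, fun p hp => not_lt.1 fun h => h1 ⟨p, hp, h⟩⟩)
  calc ν J ≤ ν (J' ∪ ({x | IsLeast J x} ∪ {x | IsGreatest J x})) := measure_mono hcover
    _ ≤ ν J' + ν ({x | IsLeast J x} ∪ {x | IsGreatest J x}) := measure_union_le _ _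
    _ ≤ ν J' + (ν {x | IsLeast J x} + ν {x | IsGreatest J x}) :=
        add_le_add_right (measure_union_le _ _) _
    _ = ν J' := by rw [hL, hG, add_zero, add_zero]
    _ = eVariationOn γ J' := hν'
    _ ≤ eVariationOn γ J := eVariationOn.mono γ hJ'sub

/-- The speed measure `ν` of `γ ∈ BV_loc(I;X)` has no atoms iff `γ` is
continuous (on `I`); and if `γ` is continuous then `ν(J) = Var(γ;J)` for *every*
subinterval `J ⊆ I`. -/
theorem speed_measure_continuous_iff {X : Type*} [MetricSpace X]
    (I : Set ℝ) (hI : I.OrdConnected) (γ : ℝ → X)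
    (hγ : ∀ a ∈ I, ∀ b ∈ I, a ≤ b → eVariationOn γ (Set.Icc a b) < ⊤)
    (ν : Measure ℝ) (hν : IsSpeedMeasure γ I ν) :
    ((∀ t ∈ I, ν {t} = 0) ↔ ContinuousOn γ I) ∧
    (ContinuousOn γ I →
      ∀ J : Set ℝ, J ⊆ I → J.OrdConnected → ν J = eVariationOn γ J) := by
  exact ⟨⟨fun hat => cont_of_atomless I hI γ hγ ν hν hat,
    fun hcont t ht => atom_zero I hI γ hγ ν hν hcont ht⟩,
    fun hcont J hJI hJc => le_antisymm (nu_le_var I hI γ hγ ν hν hcont J hJI hJc)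
      (var_le_nu I hI γ hγ ν hν hcont J hJI hJc)⟩
end
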